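/- arXiv:2005.12122 — 4 statements merged into one kernel-verified Lean document; each statement's English description precedes it below -/
import Mathlib

section
/- Let G be a connected graph and P, P' distinguishable regular bounded profiles in G. For every infinite increasing sequence (A_1,B_1) ≤ (A_2,B_2) ≤ … of separations each of which distinguishes P and P' efficiently, the sequence of separators (A_i ∩ B_i)_{i∈ℕ} is eventually constant. -/
/-- A separation of a graph `G`: a pair of vertex sets covering `V` with no edge
between `A ∖ B` and `B ∖ A`. -/
structure GraphSep {V : Type} (G : SimpleGraph V) where
  A : Set V
  B : Set V
  union_eq : A ∪ B = Set.univ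
  no_edge : ∀ a ∈ A \ B, ∀ b ∈ B \ A, ¬ G.Adj a b

namespace GraphSep

variable {V V' : Type} {G : SimpleGraph V} {G' : SimpleGraph V'}

/-- The inverse `(B,A)` of a separation `(A,B)`. -/
def inv (s : GraphSep G) : GraphSep G where
  A := s.B
  B := s.A
  union_eq := by rw [Set.union_comm]; exact s.union_eq
  no_edge := fun a ha b hb h => s.no_edge b hb a ha h.symm

/-- The separator `A ∩ B`. -/
def sepSet (s : GraphSep G) : Set V := s.A ∩ s.B

/-- The order `|A ∩ B|` of a separation, as an extended natural number. -/
noncomputable def order (s : GraphSep G) : ℕ∞ := (s.A ∩ s.B).encard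

/-- `(A,B) ≤ (C,D)` iff `A ⊆ C` and `D ⊆ B`. -/
protected def le (s t : GraphSep G) : Prop := s.A ⊆ t.A ∧ t.B ⊆ s.B

/-- Two separations are nested if after possibly replacing either by its inverse
they are `≤`-comparable. -/
def Nested (s t : GraphSep G) : Prop :=
  s.le t ∨ s.le t.inv ∨ s.inv.le t ∨ s.inv.le t.inv

lemma mem_A_or_B (s : GraphSep G) (x : V) : x ∈ s.A ∨ x ∈ s.B := by
  have h : x ∈ s.A ∪ s.B := by rw [s.union_eq]; exact Set.mem_univ x
  exact (Set.mem_union _ _ _).1 h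

/-- The join `(A,B) ∨ (C,D) = (A ∪ C, B ∩ D)`. -/
def join (s t : GraphSep G) : GraphSep G where
  A := s.A ∪ t.A
  B := s.B ∩ t.B
  union_eq := by
    apply Set.eq_univ_of_forall
    intro x
    rcases s.mem_A_or_B x with h1 | h1
    · exact Or.inl (Or.inl h1)
    · rcases t.mem_A_or_B x with h2 | h2
      · exact Or.inl (Or.inr h2)
      · exact Or.inr ⟨h1, h2⟩
  no_edge := by
    rintro a ⟨haA, haB⟩ b ⟨hbB, hbA⟩ hadj
    by_cases hsB : a ∈ s.B
    · have hatB : a ∉ t.B := fun h => haB ⟨hsB, h⟩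
      have hatA : a ∈ t.A := (t.mem_A_or_B a).resolve_right hatB
      exact t.no_edge a ⟨hatA, hatB⟩ b ⟨hbB.2, fun h => hbA (Or.inr h)⟩ hadj
    · have hasA : a ∈ s.A := (s.mem_A_or_B a).resolve_right hsB
      exact s.no_edge a ⟨hasA, hsB⟩ b ⟨hbB.1, fun h => hbA (Or.inl h)⟩ hadj

/-- The image of a separation under a graph isomorphism. -/
def map (φ : G ≃g G') (s : GraphSep G) : GraphSep G' where
  A := ⇑φ '' s.A
  B := ⇑φ '' s.B
  union_eq := by
    apply Set.eq_univ_of_forall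
    intro y
    rcases s.mem_A_or_B (φ.symm y) with h | h
    · exact Or.inl ⟨φ.symm y, h, φ.apply_symm_apply y⟩
    · exact Or.inr ⟨φ.symm y, h, φ.apply_symm_apply y⟩
  no_edge := by
    rintro a ⟨⟨x, hxA, rfl⟩, haB⟩ b ⟨⟨y, hyB, rfl⟩, hbA⟩ hadj
    exact s.no_edge x ⟨hxA, fun h => haB ⟨x, h, rfl⟩⟩ y ⟨hyB, fun h => hbA ⟨y, h, rfl⟩⟩
      (φ.map_adj_iff.mp hadj)

/-- The neighbourhood of a set of vertices. -/
def nbhd (G : SimpleGraph V) (X : Set V) : Set V := {v | v ∉ X ∧ ∃ x ∈ X, G.Adj v x}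

/-- `w` can be reached from `v` by a walk avoiding `X`. -/
def AvoidReach (G : SimpleGraph V) (X : Set V) (v w : V) : Prop :=
  ∃ p : G.Walk v w, ∀ u ∈ p.support, u ∉ X

/-- `C` is a (connected) component of `G − X`. -/
def IsCompOf (G : SimpleGraph V) (X C : Set V) : Prop :=
  ∃ v, v ∉ X ∧ C = {w | AvoidReach G X v w}

/-- A separation `(A,B)` is tight if each of `A ∖ B` and `B ∖ A` contains a component
of `G − (A ∩ B)` whose neighbourhood is all of `A ∩ B`. -/
def IsTight (s : GraphSep G) : Prop :=
  (∃ C, IsCompOf G s.sepSet C ∧ nbhd G C = s.sepSet ∧ C ⊆ s.A \ s.B) ∧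
  (∃ C, IsCompOf G s.sepSet C ∧ nbhd G C = s.sepSet ∧ C ⊆ s.B \ s.A)

/-- An orientation of `S_k`: it contains only separations of order `< k`, contains
at least one of `s, s⁻¹` for every separation of order `< k`, and contains both only
if they coincide. -/
def IsOrientation (k : ℕ∞) (P : Set (GraphSep G)) : Prop :=
  (∀ s ∈ P, s.order < k) ∧
  (∀ s : GraphSep G, s.order < k → (s ∈ P ∨ s.inv ∈ P)) ∧
  (∀ s ∈ P, s.inv ∈ P → s.inv = s)

/-- Consistency: no two members `r, s` with distinct underlying separations satisfy
`r⁻¹ ≤ s`. -/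
def Consistent (P : Set (GraphSep G)) : Prop :=
  ∀ r ∈ P, ∀ s ∈ P, r.inv.le s → r = s ∨ r = s.inv

/-- A `k`-profile: a consistent orientation of `S_k` satisfying the profile property. -/
def IsProfile (k : ℕ∞) (P : Set (GraphSep G)) : Prop :=
  IsOrientation k P ∧ Consistent P ∧ ∀ s ∈ P, ∀ t ∈ P, (s.join t).inv ∉ P

/-- A profile in `G` is a `k`-profile for some `k ∈ ℕ ∪ {ℵ₀}`. -/
def IsProfileIn (G : SimpleGraph V) (P : Set (GraphSep G)) : Prop := ∃ k : ℕ∞, IsProfile k P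

/-- A profile is regular if it contains no separation of the form `(V, X)`. -/
def RegularP (P : Set (GraphSep G)) : Prop := ∀ s ∈ P, s.A ≠ Set.univ

/-- A profile is bounded if it is a `k`-profile for some finite `k` and is not a subset
of any `ℵ₀`-profile. -/
def BoundedP (P : Set (GraphSep G)) : Prop :=
  (∃ k : ℕ, IsProfile (k : ℕ∞) P) ∧ ∀ Q : Set (GraphSep G), IsProfile ⊤ Q → ¬ P ⊆ Q

/-- `s` distinguishes the profiles `P` and `P'`. -/
def Distinguishes (s : GraphSep G) (P P' : Set (GraphSep G)) : Prop :=
  (s ∈ P ∧ s.inv ∈ P') ∨ (s.inv ∈ P ∧ s ∈ P')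

/-- `s` distinguishes `P` and `P'` efficiently: it has minimum order among all
separations distinguishing `P` and `P'`. -/
def EffDist (s : GraphSep G) (P P' : Set (GraphSep G)) : Prop :=
  Distinguishes s P P' ∧ ∀ t : GraphSep G, Distinguishes t P P' → s.order ≤ t.order

/-- `P` and `P'` are distinguishable: some finite-order separation distinguishes them. -/
def Distinguishable (P P' : Set (GraphSep G)) : Prop :=
  ∃ s : GraphSep G, s.order < ⊤ ∧ Distinguishes s P P'

/-- Robustness of a profile. -/
def RobustP (P : Set (GraphSep G)) : Prop :=
  ∀ s ∈ P, ∀ t : GraphSep G, t.order < ⊤ →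
    (s.join t).order < s.order → (s.join t.inv).order < s.order →
    (s.join t ∈ P ∨ s.join t.inv ∈ P)

/-- A `k`-profile is principal if for every vertex set `X` with `|X| < k` it contains
`(V ∖ C, C ∪ X)` for some component `C` of `G − X`. -/
def PrincipalP (k : ℕ∞) (P : Set (GraphSep G)) : Prop :=
  ∀ X : Set V, X.encard < k →
    ∃ C, IsCompOf G X C ∧ ∃ s ∈ P, s.A = Cᶜ ∧ s.B = C ∪ X

/-- `c` is a corner separation of `s` and `t`. -/
def IsCornerSep (s t c : GraphSep G) : Prop :=
  ∃ s' ∈ ({s, s.inv} : Set (GraphSep G)), ∃ t' ∈ ({t, t.inv} : Set (GraphSep G)),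
    c = s'.join t' ∨ c = (s'.join t').inv

/-- The set `S ⊆ V ∖ {x,y}` separates `x` from `y` in `G`. -/
def SeparatesIn (G : SimpleGraph V) (x y : V) (S : Set V) : Prop :=
  x ∉ S ∧ y ∉ S ∧ ∀ p : G.Walk x y, ∃ u ∈ p.support, u ∈ S

/-- `S` is a `⊆`-minimal `x`–`y`-separator in `G`. -/
def MinSeparator (G : SimpleGraph V) (x y : V) (S : Set V) : Prop :=
  SeparatesIn G x y S ∧ ∀ S' ⊆ S, SeparatesIn G x y S' → S' = S

/-- The separation of `G` induced by an (oriented) edge of a tree-decomposition. -/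
def InducedSep {ι : Type} (T : SimpleGraph ι) (𝒱 : ι → Set V) (x : GraphSep G) : Prop :=
  ∃ t t' : ι, T.Adj t t' ∧
    x.A = (⋃ u ∈ {u : ι | ∃ p : T.Walk u t, Sym2.mk t t' ∉ p.edges}, 𝒱 u) ∧
    x.B = (⋃ u ∈ {u : ι | ∃ p : T.Walk u t', Sym2.mk t t' ∉ p.edges}, 𝒱 u)

/-- Opposite pairs of corner separations of `s` and `t`. -/
def OppPair (s t c d : GraphSep G) : Prop :=
  (c = s.join t ∧ d = s.inv.join t.inv) ∨ (c = s.inv.join t.inv ∧ d = s.join t) ∨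
  (c = s.join t.inv ∧ d = s.inv.join t) ∨ (c = s.inv.join t ∧ d = s.join t.inv)

end GraphSep

section CHMAux

open GraphSep

variable {V : Type} {G : SimpleGraph V}

@[simp] lemma CHM_inv_A (s : GraphSep G) : s.inv.A = s.B := rfl
@[simp] lemma CHM_inv_B (s : GraphSep G) : s.inv.B = s.A := rfl
@[simp] lemma CHM_inv_inv (s : GraphSep G) : s.inv.inv = s := rfl
@[simp] lemma CHM_join_A (s t : GraphSep G) : (s.join t).A = s.A ∪ t.A := rfl
@[simp] lemma CHM_join_B (s t : GraphSep G) : (s.join t).B = s.B ∩ t.B := rfl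

lemma CHM_inv_inj {s t : GraphSep G} (h : s.inv = t.inv) : s = t := by
  have := congrArg GraphSep.inv h
  simpa using this

lemma CHM_order_inv (s : GraphSep G) : s.inv.order = s.order := by
  simp [GraphSep.order, GraphSep.inv, Set.inter_comm]

lemma CHM_mem_B_of_not_A (s : GraphSep G) {v : V} (h : v ∉ s.A) : v ∈ s.B :=
  (s.mem_A_or_B v).resolve_left h

lemma CHM_B_univ_of_subset {s : GraphSep G} (h : s.A ⊆ s.B) : s.B = Set.univ :=
  Set.univ_subset_iff.mp (by rw [← s.union_eq]; exact Set.union_subset h subset_rfl)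

/-- If `y.inv ∈ P'`, `y ≤ x`, and `P'` orients `x`, then `x.inv ∈ P'`. -/
lemma CHM_forced_inv {P' : Set (GraphSep G)} {κ : ℕ∞}
    (hprof : IsProfile κ P') (hreg' : RegularP P')
    {y x : GraphSep G} (hy : y.inv ∈ P') (hle : y.le x) (hord : x.order < κ) :
    x.inv ∈ P' := by
  rcases hprof.1.2.1 x hord with hx | hx
  · rcases hprof.2.1 y.inv hy x hx (by simpa using hle) with h | h
    · exfalso
      have hxA : x.A = y.B := by rw [← h]; rfl
      have hyB : y.B = Set.univ := CHM_B_univ_of_subset (by rw [← hxA]; exact hle.1)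
      exact hreg' x hx (hxA.trans hyB)
    · rw [← h]; exact hy
  · exact hx

lemma CHM_finite_unif {α : Type} {F : Set α} (hF : F.Finite) (Φ : α → ℕ → Prop)
    (h : ∀ v ∈ F, ∃ N, ∀ m, N ≤ m → Φ v m) :
    ∃ N, ∀ m, N ≤ m → ∀ v ∈ F, Φ v m := by
  refine Set.Finite.induction_on
    (motive := fun F _ => (∀ v ∈ F, ∃ N, ∀ m, N ≤ m → Φ v m) →
      ∃ N, ∀ m, N ≤ m → ∀ v ∈ F, Φ v m) F hF (fun _ => ⟨0, by simp⟩) ?_ h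
  intro a s _ _ ih hins
  obtain ⟨N₁, h₁⟩ := hins a (Set.mem_insert _ _)
  obtain ⟨N₂, h₂⟩ := ih (fun v hv => hins v (Set.mem_insert_of_mem _ hv))
  refine ⟨max N₁ N₂, fun m hm v hv => ?_⟩
  rcases hv with rfl | hv
  · exact h₁ m (le_trans (le_max_left _ _) hm)
  · exact h₂ m (le_trans (le_max_right _ _) hm) v hv

end CHMAux
open GraphSep in
/-- Main lemma: the case where the whole chain lies in `P` (and inverses in `P'`). -/
theorem CHM_main {V : Type} {G : SimpleGraph V}
    (P P' : Set (GraphSep G)) (k₀ k₁ : ℕ)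
    (hP : IsProfile (k₀ : ℕ∞) P) (hP' : IsProfile (k₁ : ℕ∞) P')
    (hbddP : ∀ Q : Set (GraphSep G), IsProfile ⊤ Q → ¬ P ⊆ Q)
    (hreg' : RegularP P')
    (f : ℕ → GraphSep G)
    (hfP : ∀ i, f i ∈ P) (hfP' : ∀ i, (f i).inv ∈ P')
    (heff : ∀ i, EffDist (f i) P P')
    (hmono : ∀ i, (f i).le (f (i + 1))) :
    ∃ n : ℕ, ∀ m, n ≤ m → (f m).A ∩ (f m).B = (f n).A ∩ (f n).B := by
  classical
  by_contra hc
  push_neg at hc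
  -- chain monotonicity
  have hchain : ∀ i j, i ≤ j → (f i).le (f j) := by
    intro i j hij
    induction j with
    | zero =>
        have : i = 0 := Nat.le_zero.mp hij
        subst this; exact ⟨subset_rfl, subset_rfl⟩
    | succ j ih =>
        rcases Nat.lt_or_ge i (j+1) with h | h
        · obtain ⟨h1, h2⟩ := ih (Nat.lt_succ_iff.mp h)
          obtain ⟨g1, g2⟩ := hmono j
          exact ⟨h1.trans g1, g2.trans h2⟩
        · have : i = j + 1 := le_antisymm hij h
          subst this; exact ⟨subset_rfl, subset_rfl⟩
  -- all orders equal
  set k : ℕ∞ := (f 0).order with hkdef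
  have hkall : ∀ i, (f i).order = k := fun i =>
    le_antisymm ((heff i).2 (f 0) (heff 0).1) ((heff 0).2 (f i) (heff i).1)
  have hkcard : ∀ i, ((f i).A ∩ (f i).B).encard = k := fun i => hkall i
  have hkk₀ : k < (k₀ : ℕ∞) := hP.1.1 (f 0) (hfP 0)
  have hkk₁ : k < (k₁ : ℕ∞) := by
    have := hP'.1.1 ((f 0).inv) (hfP' 0)
    rwa [CHM_order_inv] at this
  have hktop : k < ⊤ := lt_of_lt_of_le hkk₀ le_top
  -- limit sets
  set UA : Set V := ⋃ i, (f i).A with hUAdef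
  set IB : Set V := ⋂ i, (f i).B with hIBdef
  set E : Set V := UA ∩ IB with hEdef
  have hUAmem : ∀ i, (f i).A ⊆ UA := fun i => Set.subset_iUnion (fun i => (f i).A) i
  have hIBmem : ∀ i, IB ⊆ (f i).B := fun i => Set.iInter_subset (fun i => (f i).B) i
  -- a vertex in cofinally many separators is in E
  have hfreq : ∀ v : V, (∀ N, ∃ m, N ≤ m ∧ v ∈ (f m).A ∩ (f m).B) → v ∈ E := by
    intro v h
    constructor
    · obtain ⟨m, _, hm⟩ := h 0
      exact Set.mem_iUnion.mpr ⟨m, hm.1⟩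
    · refine Set.mem_iInter.mpr (fun j => ?_)
      obtain ⟨m, hjm, hm⟩ := h j
      exact (hchain j m hjm).2 hm.2
  -- vertices of E are eventually in every separator
  have hEev : ∀ v ∈ E, ∃ N, ∀ m, N ≤ m → v ∈ (f m).A ∩ (f m).B := by
    intro v hv
    obtain ⟨i, hi⟩ := Set.mem_iUnion.mp hv.1
    exact ⟨i, fun m him => ⟨(hchain i m him).1 hi, Set.mem_iInter.mp hv.2 m⟩⟩
  have hk1top : k + 1 < ⊤ :=
    WithTop.add_lt_top.mpr ⟨hktop, lt_of_le_of_ne le_top ENat.one_ne_top⟩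
  have hklt : k < k + 1 := (ENat.lt_add_one_iff hktop.ne).mpr le_rfl
  -- E.encard ≤ k
  have hEle : E.encard ≤ k := by
    by_contra h
    push_neg at h
    obtain ⟨F, hFE, hFcard⟩ := Set.exists_subset_encard_eq (Order.add_one_le_of_lt h)
    have hFfin : F.Finite := Set.encard_lt_top_iff.mp (hFcard ▸ hk1top)
    obtain ⟨N, hN⟩ := CHM_finite_unif hFfin (fun v m => v ∈ (f m).A ∩ (f m).B)
      (fun v hv => hEev v (hFE hv))
    have hsub : F ⊆ (f N).A ∩ (f N).B := fun v hv => hN N le_rfl v hv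
    have hle2 := Set.encard_mono hsub
    rw [hFcard, hkcard N] at hle2
    exact absurd (lt_of_lt_of_le hklt hle2) (lt_irrefl k)
  -- E.encard < k (using non-constancy)
  have hElt : E.encard < k := by
    rcases lt_or_eq_of_le hEle with h | h
    · exact h
    · exfalso
      have hEfin : E.Finite := Set.encard_lt_top_iff.mp (h ▸ hktop)
      obtain ⟨N, hN⟩ := CHM_finite_unif hEfin (fun v m => v ∈ (f m).A ∩ (f m).B) hEev
      have hSE : ∀ m, N ≤ m → (f m).A ∩ (f m).B = E := by
        intro m hm
        have hsub : E ⊆ (f m).A ∩ (f m).B := fun v hv => hN m hm v hv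
        by_contra hne
        obtain ⟨x, hxS, hxE⟩ : ∃ x, x ∈ (f m).A ∩ (f m).B ∧ x ∉ E := by
          rcases Set.not_subset.mp (fun hss => hne (Set.Subset.antisymm hss hsub)) with ⟨x, hx1, hx2⟩
          exact ⟨x, hx1, hx2⟩
        have hins : insert x E ⊆ (f m).A ∩ (f m).B := Set.insert_subset hxS hsub
        have h2 := Set.encard_mono hins
        rw [Set.encard_insert_of_notMem hxE, h, hkcard m] at h2
        exact absurd (lt_of_lt_of_le hklt h2) (lt_irrefl k)
      obtain ⟨m, hm, hne⟩ := hc N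
      exact hne ((hSE m hm).trans (hSE N le_rfl).symm)
  have hEfin : E.Finite := Set.encard_lt_top_iff.mp (lt_trans hElt hktop)
  obtain ⟨NE, hNE⟩ := CHM_finite_unif hEfin (fun v m => v ∈ (f m).A ∩ (f m).B) hEev
  have hNEsub : ∀ m, NE ≤ m → E ⊆ (f m).A ∩ (f m).B := fun m hm v hv => hNE m hm v hv
  -- strands exist
  have hstr : ∀ m, NE ≤ m → (((f m).A ∩ (f m).B) \ E).Nonempty := by
    intro m hm
    rw [Set.diff_nonempty]
    intro hsub
    have heq : (f m).A ∩ (f m).B = E := Set.Subset.antisymm hsub (hNEsub m hm)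
    rw [← heq, hkcard m] at hElt
    exact absurd hElt (lt_irrefl k)
  obtain ⟨w, hw⟩ : ∃ w : ℕ → V, ∀ n, w n ∈ (((f (n + NE)).A ∩ (f (n + NE)).B) \ E) :=
    ⟨fun n => (hstr (n + NE) (Nat.le_add_left _ _)).choose,
     fun n => (hstr (n + NE) (Nat.le_add_left _ _)).choose_spec⟩
  -- each vertex is hit finitely often
  have hfib : ∀ v : V, {n : ℕ | w n = v}.Finite := by
    intro v
    rw [← Set.not_infinite]
    intro hinf
    have hvE : v ∈ E := by
      apply hfreq
      intro N
      obtain ⟨m, hmem, hlt⟩ := hinf.exists_gt N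
      exact ⟨m + NE, by omega, hmem ▸ (hw m).1⟩
    obtain ⟨m, hmem, _⟩ := hinf.exists_gt 0
    exact (hw m).2 (by rw [hmem]; exact hvE)
  -- ultrafilter along the strands
  haveI hmapne : (Filter.map w Filter.atTop).NeBot := Filter.map_neBot
  set μ : Ultrafilter V := Ultrafilter.of (Filter.map w Filter.atTop) with hμdef
  have hμev : ∀ s : Set V, {n : ℕ | w n ∈ s} ∈ (Filter.atTop : Filter ℕ) → s ∈ μ := by
    intro s hs
    exact (Ultrafilter.of_le (Filter.map w Filter.atTop)) (Filter.mem_map.mpr hs)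
  have hesc : ∀ F : Set V, F.Finite → Fᶜ ∈ μ := by
    intro F hF
    apply hμev
    have hfin : {n : ℕ | w n ∈ F}.Finite := by
      have hsub : {n : ℕ | w n ∈ F} ⊆ ⋃ v ∈ F, {n : ℕ | w n = v} := by
        intro n hn; exact Set.mem_biUnion hn rfl
      exact Set.Finite.subset (hF.biUnion fun v _ => hfib v) hsub
    rw [← Nat.cofinite_eq_atTop, Filter.mem_cofinite]
    have hcompl : {n : ℕ | w n ∈ Fᶜ}ᶜ = {n : ℕ | w n ∈ F} := by
      ext n; simp
    rw [hcompl]; exact hfin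
  have hsepfin : ∀ s : GraphSep G, s.order < ⊤ → (s.A ∩ s.B).Finite :=
    fun s hs => Set.encard_lt_top_iff.mp hs
  -- complement of B∖A is A
  have hcomplA : ∀ s : GraphSep G, (s.B \ s.A)ᶜ ⊆ s.A ∪ (s.A ∩ s.B) := by
    intro s v hv
    simp only [Set.mem_compl_iff, Set.mem_diff, not_and, not_not] at hv
    rcases s.mem_A_or_B v with h | h
    · exact Or.inl h
    · exact Or.inl (hv h)
  have hAmem : ∀ s : GraphSep G, s.order < ⊤ → (s.B \ s.A) ∉ μ → s.A \ s.B ∈ μ := by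
    intro s hord hnot
    have h1 : (s.B \ s.A)ᶜ ∈ μ := (Ultrafilter.compl_mem_iff_notMem).mpr hnot
    have h2 : s.A ∈ μ := by
      refine Filter.mem_of_superset h1 ?_
      intro v hv
      rcases hcomplA s hv with h | h
      · exact h
      · exact h.1
    have h3 := Filter.inter_mem h2 (hesc _ (hsepfin s hord))
    refine Filter.mem_of_superset h3 ?_
    intro v hv
    exact ⟨hv.1, fun hB => hv.2 ⟨hv.1, hB⟩⟩
  -- the ultrafilter profile
  set Qmu : Set (GraphSep G) := {s | s.order < ⊤ ∧ s.B \ s.A ∈ μ} with hQdef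
  have hQprof : IsProfile ⊤ Qmu := by
    refine ⟨⟨fun s hs => hs.1, ?_, ?_⟩, ?_, ?_⟩
    · intro s hord
      by_cases h : s.B \ s.A ∈ μ
      · exact Or.inl ⟨hord, h⟩
      · refine Or.inr ⟨by rwa [CHM_order_inv], ?_⟩
        show s.inv.B \ s.inv.A ∈ μ
        have := hAmem s hord h
        simpa using this
    · intro s hs hs'
      exfalso
      have h3 := Filter.inter_mem hs.2 hs'.2
      obtain ⟨v, hv⟩ := Filter.nonempty_of_mem h3
      simp only [Set.mem_inter_iff, Set.mem_diff, CHM_inv_A, CHM_inv_B] at hv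
      exact hv.1.2 hv.2.1
    · intro r hr s hs hle
      exfalso
      have h3 := Filter.inter_mem hr.2 hs.2
      obtain ⟨v, hv⟩ := Filter.nonempty_of_mem h3
      exact hv.2.2 (hle.1 hv.1.1)
    · intro s hs t ht hj
      have h3 := Filter.inter_mem (Filter.inter_mem hs.2 ht.2) hj.2
      obtain ⟨v, hv⟩ := Filter.nonempty_of_mem h3
      simp only [Set.mem_inter_iff, Set.mem_diff, CHM_inv_A, CHM_inv_B, CHM_join_A,
        CHM_join_B, Set.mem_union, not_or] at hv
      obtain ⟨⟨⟨hsB, hsA⟩, ⟨htB, htA⟩⟩, hvj, _⟩ := hv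
      rcases hvj with h | h
      · exact hsA h
      · exact htA h
  -- extract t*
  obtain ⟨tstar, htP, htQ⟩ := Set.not_subset.mp (hbddP Qmu hQprof)
  have htord : tstar.order < (k₀ : ℕ∞) := hP.1.1 tstar htP
  have htordtop : tstar.order < ⊤ := lt_of_lt_of_le htord le_top
  have htAB : tstar.A \ tstar.B ∈ μ := by
    apply hAmem tstar htordtop
    intro h
    exact htQ ⟨htordtop, h⟩
  -- D is infinite
  have hD : {n : ℕ | w n ∈ tstar.A \ tstar.B}.Infinite := by
    by_contra hfin
    rw [Set.not_infinite] at hfin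
    have hcc : (tstar.A \ tstar.B)ᶜ ∈ μ := by
      apply hμev
      rw [← Nat.cofinite_eq_atTop, Filter.mem_cofinite]
      have hcompl : {n : ℕ | w n ∈ (tstar.A \ tstar.B)ᶜ}ᶜ = {n : ℕ | w n ∈ tstar.A \ tstar.B} := by
        ext n; simp
      rw [hcompl]; exact hfin
    exact (Ultrafilter.compl_mem_iff_notMem.mp hcc) htAB
  -- stabilization threshold for sep(t*) ∩ UA
  obtain ⟨P1, hP1⟩ : ∃ P1, ∀ m, P1 ≤ m →
      ∀ v ∈ (tstar.A ∩ tstar.B) ∩ UA, v ∈ (f m).B → v ∈ E := by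
    apply CHM_finite_unif (Set.Finite.subset (hsepfin tstar htordtop) Set.inter_subset_left)
    intro v hv
    by_cases hvIB : v ∈ IB
    · exact ⟨0, fun m _ _ => ⟨hv.2, hvIB⟩⟩
    · obtain ⟨i, hi⟩ : ∃ i, v ∉ (f i).B := by
        by_contra hno
        push_neg at hno
        exact hvIB (Set.mem_iInter.mpr hno)
      exact ⟨i, fun m him hvB => absurd ((hchain i m him).2 hvB) hi⟩
  -- pick the index p
  obtain ⟨p', hp'D, hp'gt⟩ := hD.exists_gt P1
  set p : ℕ := p' + NE with hpdef
  have hpNE : NE ≤ p := Nat.le_add_left _ _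
  have hpP1 : P1 ≤ p := by omega
  have hwp : w p' ∈ ((f p).A ∩ (f p).B) \ E := hw p'
  have hwpt : w p' ∈ tstar.A \ tstar.B := hp'D
  -- the limit separation s∞
  have hsInf_union : UA ∪ IB = Set.univ := by
    apply Set.eq_univ_of_forall
    intro v
    by_cases hvIB : v ∈ IB
    · exact Or.inr hvIB
    · obtain ⟨i, hi⟩ : ∃ i, v ∉ (f i).B := by
        by_contra hno
        push_neg at hno
        exact hvIB (Set.mem_iInter.mpr hno)
      exact Or.inl (hUAmem i ((f i).mem_A_or_B v |>.resolve_right hi))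
  have hsInf_ne : ∀ a ∈ UA \ IB, ∀ b ∈ IB \ UA, ¬ G.Adj a b := by
    rintro a ⟨haU, haI⟩ b ⟨hbI, hbU⟩ hadj
    obtain ⟨i₁, hi₁⟩ := Set.mem_iUnion.mp haU
    obtain ⟨i₂, hi₂⟩ : ∃ i, a ∉ (f i).B := by
      by_contra hno
      push_neg at hno
      exact haI (Set.mem_iInter.mpr hno)
    set i := max i₁ i₂ with hidef
    have haA : a ∈ (f i).A := (hchain i₁ i (le_max_left _ _)).1 hi₁
    have haB : a ∉ (f i).B := fun h => hi₂ ((hchain i₂ i (le_max_right _ _)).2 h)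
    have hbB : b ∈ (f i).B := Set.mem_iInter.mp hbI i
    have hbA : b ∉ (f i).A := fun h => hbU (hUAmem i h)
    exact (f i).no_edge a ⟨haA, haB⟩ b ⟨hbB, hbA⟩ hadj
  set sInf : GraphSep G := ⟨UA, IB, hsInf_union, hsInf_ne⟩ with hsInfdef
  have hsInford : sInf.order = E.encard := rfl
  have hsInflt : sInf.order < k := by rw [hsInford]; exact hElt
  have hsInfle0 : (f 0).le sInf := ⟨hUAmem 0, hIBmem 0⟩
  have hsInfinvP' : sInf.inv ∈ P' :=
    CHM_forced_inv hP' hreg' (hfP' 0) hsInfle0 (lt_trans hsInflt hkk₁)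
  have hsInfinvP : sInf.inv ∈ P := by
    rcases hP.1.2.1 sInf (lt_trans hsInflt hkk₀) with h | h
    · exfalso
      have hd : Distinguishes sInf P P' := Or.inl ⟨h, hsInfinvP'⟩
      have := (heff 0).2 sInf hd
      rw [← hkdef] at this
      exact absurd (lt_of_le_of_lt this hsInflt) (lt_irrefl k)
    · exact h
  -- the corner c = s∞.inv ∨ f p
  set c : GraphSep G := sInf.inv.join (f p) with hcdef
  have hcsep : c.A ∩ c.B ⊆ (f p).A ∩ (f p).B := by
    rintro v ⟨hvA, hvB⟩
    rcases hvA with hvIB | hvAp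
    · exact hNEsub p hpNE ⟨hvB.1, hvIB⟩
    · exact ⟨hvAp, hvB.2⟩
  have hcord : c.order ≤ k := by
    calc c.order ≤ ((f p).A ∩ (f p).B).encard := Set.encard_mono hcsep
    _ = k := hkcard p
  have hcP : c ∈ P := by
    have hnotinv : c.inv ∉ P := hP.2.2 sInf.inv hsInfinvP (f p) (hfP p)
    rcases hP.1.2.1 c (lt_of_le_of_lt hcord hkk₀) with h | h
    · exact h
    · exact absurd h hnotinv
  -- the decisive corner ξ = c ∨ t*
  set xi : GraphSep G := c.join tstar with hxidef
  have hxisep : xi.A ∩ xi.B ⊆ ((f p).A ∩ (f p).B) \ {w p'} := by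
    rintro v ⟨hvA, hvB⟩
    obtain ⟨⟨hvUA, hvBp⟩, hvtB⟩ := hvB
    have hvnotwp : v ∈ tstar.B → v ≠ w p' := by
      intro hvt hveq
      exact hwpt.2 (hveq ▸ hvt)
    have hEnot : ∀ u ∈ E, u ≠ w p' := by
      intro u hu hueq
      exact hwp.2 (hueq ▸ hu)
    rcases hvA with (hvIB | hvAp) | hvtA
    · have hvE : v ∈ E := ⟨hvUA, hvIB⟩
      exact ⟨hNEsub p hpNE hvE, hEnot v hvE⟩
    · exact ⟨⟨hvAp, hvBp⟩, hvnotwp hvtB⟩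
    · have hvE : v ∈ E := hP1 p hpP1 v ⟨⟨hvtA, hvtB⟩, hvUA⟩ hvBp
      exact ⟨hNEsub p hpNE hvE, hEnot v hvE⟩
  have hSpfin : ((f p).A ∩ (f p).B).Finite := by
    apply Set.encard_lt_top_iff.mp
    rw [hkcard p]; exact hktop
  have hxiord : xi.order < k := by
    have h1 : xi.order ≤ (((f p).A ∩ (f p).B) \ {w p'}).encard := Set.encard_mono hxisep
    have h2 : (((f p).A ∩ (f p).B) \ {w p'}).encard < ((f p).A ∩ (f p).B).encard := by
      apply (hSpfin.subset Set.diff_subset).encard_lt_encard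
      constructor
      · exact Set.diff_subset
      · intro hsub
        exact (hsub hwp.1).2 rfl
    calc xi.order ≤ _ := h1
    _ < _ := h2
    _ = k := hkcard p
  have hxile : (f p).le xi := by
    constructor
    · intro v hv
      exact Or.inl (Or.inr hv)
    · intro v hv
      exact hv.1.2
  have hxiinvP' : xi.inv ∈ P' :=
    CHM_forced_inv hP' hreg' (hfP' p) hxile (lt_trans hxiord hkk₁)
  have hxinotP : xi ∉ P := by
    intro h
    have := (heff 0).2 xi (Or.inl ⟨h, hxiinvP'⟩)
    rw [← hkdef] at this
    exact absurd (lt_of_le_of_lt this hxiord) (lt_irrefl k)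
  have hxiinvP : xi.inv ∈ P := by
    rcases hP.1.2.1 xi (lt_trans hxiord hkk₀) with h | h
    · exact absurd h hxinotP
    · exact h
  exact hP.2.2 c hcP tstar htP hxiinvP
open GraphSep in
/-- for distinguishable regular bounded profiles, the separators of any
increasing chain of efficient distinguishers are eventually constant. -/
theorem stmt8 {V : Type} (G : SimpleGraph V) (hG : G.Connected)
    (P P' : Set (GraphSep G))
    (hP : IsProfileIn G P) (hP' : IsProfileIn G P')
    (hreg : RegularP P) (hreg' : RegularP P')
    (hbdd : BoundedP P) (hbdd' : BoundedP P')
    (hdist : Distinguishable P P')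
    (f : ℕ → GraphSep G)
    (heff : ∀ i, EffDist (f i) P P')
    (hmono : ∀ i, (f i).le (f (i + 1))) :
    ∃ n : ℕ, ∀ m, n ≤ m → (f m).A ∩ (f m).B = (f n).A ∩ (f n).B := by
  classical
  obtain ⟨⟨k₀, hk₀P⟩, hbP⟩ := hbdd
  obtain ⟨⟨k₁, hk₁P'⟩, hbP'⟩ := hbdd'
  have hDist : ∀ i, Distinguishes (f i) P P' := fun i => (heff i).1
  have hchain : ∀ i j, i ≤ j → (f i).le (f j) := by
    intro i j hij
    induction j with
    | zero =>
        have : i = 0 := Nat.le_zero.mp hij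
        subst this; exact ⟨subset_rfl, subset_rfl⟩
    | succ j ih =>
        rcases Nat.lt_or_ge i (j+1) with h | h
        · obtain ⟨h1, h2⟩ := ih (Nat.lt_succ_iff.mp h)
          obtain ⟨g1, g2⟩ := hmono j
          exact ⟨h1.trans g1, g2.trans h2⟩
        · have : i = j + 1 := le_antisymm hij h
          subst this; exact ⟨subset_rfl, subset_rfl⟩
  have hnotboth : ∀ s, s ∈ P → s.inv ∈ P → False := by
    intro s hs hs'
    have h := hk₀P.1.2.2 s hs hs'
    have hBA : s.B = s.A := congrArg GraphSep.A h
    have hAu : s.A = Set.univ := by rw [← s.union_eq, hBA, Set.union_self]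
    exact hreg s hs hAu
  have hMONO : ∀ i j, i ≤ j → f j ∈ P → f i ∈ P := by
    intro i j hij hj
    by_contra hi
    have hiinv : (f i).inv ∈ P := by
      rcases hDist i with ⟨h, _⟩ | ⟨h, _⟩
      · exact absurd h hi
      · exact h
    have hle : (f i).le (f j) := hchain i j hij
    rcases hk₀P.2.1 (f i).inv hiinv (f j) hj (by simpa using hle) with h | h
    · have hA : (f j).A = (f i).B := congrArg GraphSep.A h.symm
      have hsub : (f i).A ⊆ (f i).B := by rw [← hA]; exact hle.1
      have hAu : (f j).A = Set.univ := by rw [hA]; exact CHM_B_univ_of_subset hsub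
      exact hreg (f j) hj hAu
    · have heq := CHM_inv_inj h
      rw [heq] at hi
      exact hi hj
  by_cases hall : ∀ i, f i ∈ P
  · have hfP' : ∀ i, (f i).inv ∈ P' := by
      intro i
      rcases hDist i with ⟨_, h⟩ | ⟨h, _⟩
      · exact h
      · exact (hnotboth (f i) (hall i) h).elim
    exact CHM_main P P' k₀ k₁ hk₀P hk₁P' hbP hreg' f hall hfP' heff hmono
  · push_neg at hall
    obtain ⟨i₀, hi₀⟩ := hall
    have htail : ∀ i, f (i₀ + i) ∉ P :=
      fun i h => hi₀ (hMONO i₀ (i₀ + i) (Nat.le_add_right _ _) h)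
    have hg : ∀ i, f (i₀ + i) ∈ P' ∧ (f (i₀ + i)).inv ∈ P := by
      intro i
      rcases hDist (i₀ + i) with ⟨h, _⟩ | ⟨h1, h2⟩
      · exact absurd h (htail i)
      · exact ⟨h2, h1⟩
    have heffsym : ∀ i, EffDist (f (i₀ + i)) P' P := by
      intro i
      refine ⟨?_, ?_⟩
      · rcases (heff (i₀ + i)).1 with ⟨h1, h2⟩ | ⟨h1, h2⟩
        · exact Or.inr ⟨h2, h1⟩
        · exact Or.inl ⟨h2, h1⟩
      · intro t ht
        apply (heff (i₀ + i)).2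
        rcases ht with ⟨h1, h2⟩ | ⟨h1, h2⟩
        · exact Or.inr ⟨h2, h1⟩
        · exact Or.inl ⟨h2, h1⟩
    obtain ⟨n, hn⟩ := CHM_main P' P k₁ k₀ hk₁P' hk₀P hbP' hreg (fun i => f (i₀ + i))
      (fun i => (hg i).1) (fun i => (hg i).2) heffsym (fun i => hmono (i₀ + i))
    refine ⟨i₀ + n, fun m hm => ?_⟩
    have h1 := hn (m - i₀) (by omega)
    have h2 : i₀ + (m - i₀) = m := by omega
    rw [h2] at h1
    exact h1
end

section
/- Let G be a connected graph and P, P' distinguishable regular bounded profiles in G. Then the set 𝒜_{P,P'} of separations efficiently distinguishing P and P' is closed under taking limits: if (A,B) is a separation of G such that for every finite set Z of vertices there exists (A',B') ∈ 𝒜_{P,P'} with A' ∩ Z = A ∩ Z and B' ∩ Z = B ∩ Z, then (A,B) ∈ 𝒜_{P,P'}. -/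
namespace GraphSep

variable {V : Type} {G : SimpleGraph V}

lemma ext' {s t : GraphSep G} (hA : s.A = t.A) (hB : s.B = t.B) : s = t := by
  cases s; cases t; simp only at hA hB; subst hA; subst hB; rfl

lemma inv_A' (s : GraphSep G) : s.inv.A = s.B := rfl
lemma inv_B' (s : GraphSep G) : s.inv.B = s.A := rfl
lemma join_A' (s t : GraphSep G) : (s.join t).A = s.A ∪ t.A := rfl
lemma join_B' (s t : GraphSep G) : (s.join t).B = s.B ∩ t.B := rfl

lemma inv_inv' (s : GraphSep G) : s.inv.inv = s := ext' rfl rfl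

lemma order_inv' (s : GraphSep G) : s.inv.order = s.order := by
  unfold order; rw [inv_A', inv_B', Set.inter_comm]

lemma order_eq (s : GraphSep G) : s.order = (s.A ∩ s.B).encard := rfl

/-- If the join of two members of a profile has full `A`-side, we get a contradiction
with regularity. -/
lemma univ_join_clash {κ : ℕ∞} {R : Set (GraphSep G)} (hprof : IsProfile κ R)
    (hreg : RegularP R) {a b : GraphSep G} (ha : a ∈ R) (hb : b ∈ R)
    (hA : (a.join b).A = Set.univ) (hord : (a.join b).order < κ) : False := by
  have h1 : (a.join b).inv ∉ R := hprof.2.2 a ha b hb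
  rcases hprof.1.2.1 _ hord with h | h
  · exact hreg _ h hA
  · exact h1 h

end GraphSep
namespace GraphSep

variable {V : Type} {G : SimpleGraph V}

/-- Key construction: from a profile `R`, a member `σ`, and a family of separations
`T Z` agreeing with `σ` on each finite `Z` whose inverses lie in `R` (ultrafilter-often),
build an `ℵ₀`-profile extending `R`. -/
lemma buildQ (R : Set (GraphSep G)) (kR : ℕ)
    (hprof : IsProfile (kR : ℕ∞) R) (hreg : RegularP R)
    (σ : GraphSep G) (hσ : σ ∈ R)
    (T : Finset V → GraphSep G)
    (hagree : ∀ Z : Finset V, (T Z).A ∩ ↑Z = σ.A ∩ ↑Z ∧ (T Z).B ∩ ↑Z = σ.B ∩ ↑Z)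
    (U : Ultrafilter (Finset V)) (hUtop : (U : Filter (Finset V)) ≤ Filter.atTop)
    (hU : {Z : Finset V | (T Z).inv ∈ R} ∈ U) :
    ∃ Q : Set (GraphSep G), IsProfile ⊤ Q ∧ R ⊆ Q := by
  classical
  have keyA : ∀ (Z : Finset V) (x : V), x ∈ (Z : Set V) → (x ∈ (T Z).A ↔ x ∈ σ.A) := by
    intro Z x hx
    constructor
    · intro h
      have h2 : x ∈ (T Z).A ∩ (Z : Set V) := ⟨h, hx⟩
      rw [(hagree Z).1] at h2; exact h2.1
    · intro h
      have h2 : x ∈ σ.A ∩ (Z : Set V) := ⟨h, hx⟩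
      rw [← (hagree Z).1] at h2; exact h2.1
  have keyB : ∀ (Z : Finset V) (x : V), x ∈ (Z : Set V) → (x ∈ (T Z).B ↔ x ∈ σ.B) := by
    intro Z x hx
    constructor
    · intro h
      have h2 : x ∈ (T Z).B ∩ (Z : Set V) := ⟨h, hx⟩
      rw [(hagree Z).2] at h2; exact h2.1
    · intro h
      have h2 : x ∈ σ.B ∩ (Z : Set V) := ⟨h, hx⟩
      rw [← (hagree Z).2] at h2; exact h2.1
  have memU : ∀ W : Set V, W.Finite → {Z : Finset V | W ⊆ ↑Z} ∈ U := by
    intro W hW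
    have h1 : Set.Ici hW.toFinset ∈ (Filter.atTop : Filter (Finset V)) :=
      Filter.Ici_mem_atTop _
    have h2 : Set.Ici hW.toFinset ∈ U := hUtop h1
    refine Filter.mem_of_superset h2 ?_
    intro Z hZ x hx
    exact Finset.mem_coe.mpr (hZ (hW.mem_toFinset.mpr hx))
  have hσord : σ.order < (kR : ℕ∞) := hprof.1.1 σ hσ
  have hσfin : (σ.A ∩ σ.B).Finite :=
    Set.encard_lt_top_iff.mp (lt_of_lt_of_le hσord le_top)
  -- the corner of σ and (T Z).inv lies in R
  have keyρ : ∀ Z : Finset V, σ.A ∩ σ.B ⊆ ↑Z → (T Z).inv ∈ R →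
      σ.join (T Z).inv ∈ R := by
    intro Z hZ hinv
    have hnot : (σ.join (T Z).inv).inv ∉ R := hprof.2.2 σ hσ _ hinv
    have hsub : (σ.join (T Z).inv).A ∩ (σ.join (T Z).inv).B ⊆ (T Z).A ∩ (T Z).B := by
      rintro x ⟨hx1, hxB, hxtA⟩
      refine ⟨hxtA, ?_⟩
      rcases hx1 with h | h
      · exact (keyB Z x (hZ ⟨h, hxB⟩)).mpr hxB
      · exact h
    have hord : (σ.join (T Z).inv).order < (kR : ℕ∞) := by
      have h1 : (σ.join (T Z).inv).order ≤ (T Z).inv.order := by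
        rw [order_eq, order_eq, inv_A', inv_B', Set.inter_comm (T Z).B]
        exact Set.encard_mono hsub
      exact lt_of_le_of_lt h1 (hprof.1.1 _ hinv)
    rcases hprof.1.2.1 _ hord with h | h
    · exact h
    · exact absurd h hnot
  -- the separator of the relative corner is inside that of T Z
  have keyE : ∀ (Z : Finset V) (w : GraphSep G), σ.A ∩ σ.B ⊆ ↑Z → w.A ∩ w.B ⊆ ↑Z →
      (w.join (σ.join (T Z).inv)).A ∩ (w.join (σ.join (T Z).inv)).B
        ⊆ (T Z).A ∩ (T Z).B := by
    rintro Z w hZσ hZw x ⟨hx1, hxwB, hxσB, hxtA⟩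
    refine ⟨hxtA, ?_⟩
    rcases hx1 with h | h | h
    · exact (keyB Z x (hZw ⟨h, hxwB⟩)).mpr hxσB
    · exact (keyB Z x (hZσ ⟨h, hxσB⟩)).mpr hxσB
    · exact h
  have keyEord : ∀ (Z : Finset V) (w : GraphSep G), σ.A ∩ σ.B ⊆ ↑Z → w.A ∩ w.B ⊆ ↑Z →
      (T Z).inv ∈ R → (w.join (σ.join (T Z).inv)).order < (kR : ℕ∞) := by
    intro Z w h1 h2 h3
    have h4 : (w.join (σ.join (T Z).inv)).order ≤ (T Z).inv.order := by
      rw [order_eq, order_eq, inv_A', inv_B', Set.inter_comm (T Z).B]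
      exact Set.encard_mono (keyE Z w h1 h2)
    exact lt_of_le_of_lt h4 (hprof.1.1 _ h3)
  -- the crucial identity
  have keyjoin : ∀ (Z : Finset V) (w : GraphSep G), σ.A ∩ σ.B ⊆ ↑Z → w.A ∩ w.B ⊆ ↑Z →
      ((w.join (σ.join (T Z).inv)).inv.join ((w.inv.join (σ.join (T Z).inv)).inv))
        = (σ.join (T Z).inv).inv := by
    intro Z w h1 h2
    have hsw : w.A ∩ w.B ⊆ σ.A ∪ (T Z).B := by
      intro x hx
      rcases σ.mem_A_or_B x with h | h
      · exact Or.inl h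
      · exact Or.inr ((keyB Z x (h2 hx)).mpr h)
    apply ext'
    · show (w.B ∩ (σ.B ∩ (T Z).A)) ∪ (w.A ∩ (σ.B ∩ (T Z).A)) = σ.B ∩ (T Z).A
      ext x
      simp only [Set.mem_union, Set.mem_inter_iff]
      constructor
      · rintro (⟨_, h⟩ | ⟨_, h⟩) <;> exact h
      · intro hx
        rcases w.mem_A_or_B x with h | h
        · exact Or.inr ⟨h, hx⟩
        · exact Or.inl ⟨h, hx⟩
    · show (w.A ∪ (σ.A ∪ (T Z).B)) ∩ (w.B ∪ (σ.A ∪ (T Z).B)) = σ.A ∪ (T Z).B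
      ext x
      simp only [Set.mem_union, Set.mem_inter_iff]
      constructor
      · rintro ⟨h1', h2'⟩
        rcases h1' with h | h
        · rcases h2' with h' | h'
          · simpa using hsw ⟨h, h'⟩
          · exact h'
        · exact h
      · intro hx; exact ⟨Or.inr hx, Or.inr hx⟩
    
  -- the candidate profile
  set S : GraphSep G → Set (Finset V) := fun w =>
    {Z : Finset V | σ.A ∩ σ.B ⊆ ↑Z ∧ w.A ∩ w.B ⊆ ↑Z ∧ (T Z).inv ∈ R ∧
      w.join (σ.join (T Z).inv) ∈ R} with hS
  set Q : Set (GraphSep G) := {w : GraphSep G | w.order < ⊤ ∧ S w ∈ U} with hQdef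
  have hM : ∀ w : GraphSep G, w.order < ⊤ →
      {Z : Finset V | σ.A ∩ σ.B ⊆ ↑Z ∧ w.A ∩ w.B ⊆ ↑Z ∧ (T Z).inv ∈ R} ∈ U := by
    intro w hw
    have hwfin : (w.A ∩ w.B).Finite := Set.encard_lt_top_iff.mp hw
    have := Filter.inter_mem (Filter.inter_mem (memU _ hσfin) (memU _ hwfin)) hU
    refine Filter.mem_of_superset this ?_
    rintro Z ⟨⟨hz1, hz2⟩, hz3⟩
    exact ⟨hz1, hz2, hz3⟩
  have hsep_inv : ∀ w : GraphSep G, w.inv.A ∩ w.inv.B = w.A ∩ w.B := by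
    intro w; rw [inv_A', inv_B', Set.inter_comm]
  -- totality
  have htot : ∀ w : GraphSep G, w.order < ⊤ → w ∈ Q ∨ w.inv ∈ Q := by
    intro w hw
    have hw' : w.inv.order < ⊤ := by rwa [order_inv']
    have hsub : {Z : Finset V | σ.A ∩ σ.B ⊆ ↑Z ∧ w.A ∩ w.B ⊆ ↑Z ∧ (T Z).inv ∈ R}
        ⊆ S w ∪ S w.inv := by
      rintro Z ⟨h1, h2, h3⟩
      have h2' : w.inv.A ∩ w.inv.B ⊆ ↑Z := by rwa [hsep_inv]
      have hρ := keyρ Z h1 h3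
      rcases hprof.1.2.1 _ (keyEord Z w h1 h2 h3) with hE | hE
      · exact Or.inl ⟨h1, h2, h3, hE⟩
      · rcases hprof.1.2.1 _ (keyEord Z w.inv h1 h2' h3) with hE' | hE'
        · exact Or.inr ⟨h1, h2', h3, hE'⟩
        · exfalso
          have hpp := hprof.2.2 _ hE _ hE'
          rw [keyjoin Z w h1 h2, inv_inv'] at hpp
          exact hpp hρ
    have hmem : S w ∪ S w.inv ∈ U := Filter.mem_of_superset (hM w hw) hsub
    rcases Ultrafilter.union_mem_iff.mp hmem with h | h
    · exact Or.inl ⟨hw, h⟩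
    · exact Or.inr ⟨hw', h⟩
  -- no separation together with its inverse
  have hnotboth : ∀ w : GraphSep G, w ∈ Q → w.inv ∈ Q → False := by
    intro w hwQ hwiQ
    obtain ⟨Z, ⟨h1, h2, h3, hE1⟩, ⟨_, _, _, hE2⟩⟩ :=
      Ultrafilter.nonempty_of_mem (Filter.inter_mem hwQ.2 hwiQ.2)
    refine univ_join_clash hprof hreg hE1 hE2 ?_ ?_
    · apply Set.eq_univ_of_forall
      intro x
      rcases w.mem_A_or_B x with h | h
      · exact Or.inl (Or.inl h)
      · exact Or.inr (Or.inl h)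
    · have hsub2 : ((w.join (σ.join (T Z).inv)).join
          (w.inv.join (σ.join (T Z).inv))).A ∩ ((w.join (σ.join (T Z).inv)).join
          (w.inv.join (σ.join (T Z).inv))).B ⊆ σ.A ∩ σ.B := by
        rintro x ⟨-, ⟨hwB, hσB, htA⟩, ⟨hwA, -, -⟩⟩
        have hxZ : x ∈ (Z : Set V) := h2 ⟨hwA, hwB⟩
        exact ⟨(keyA Z x hxZ).mp htA, hσB⟩
      calc ((w.join (σ.join (T Z).inv)).join (w.inv.join (σ.join (T Z).inv))).order
          ≤ (σ.A ∩ σ.B).encard := Set.encard_mono hsub2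
        _ < (kR : ℕ∞) := hσord
  -- consistency
  have hcons : Consistent Q := by
    intro w₁ hw₁ w₂ hw₂ hle
    exfalso
    obtain ⟨Z, ⟨h1, h2, h3, hE1⟩, ⟨-, h2', -, hE2⟩⟩ :=
      Ultrafilter.nonempty_of_mem (Filter.inter_mem hw₁.2 hw₂.2)
    have hle' : (w₁.join (σ.join (T Z).inv)).inv.le (w₂.join (σ.join (T Z).inv)) := by
      constructor
      · rintro x ⟨hx1, hx2⟩
        exact Or.inl (hle.1 hx1)
      · rintro x ⟨hx1, hx2⟩
        exact Or.inl (hle.2 hx1)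
    rcases hprof.2.1 _ hE1 _ hE2 hle' with heq | heq
    · by_cases hAu : (w₁.join (σ.join (T Z).inv)).A = Set.univ
      · exact hreg _ hE1 hAu
      · obtain ⟨v, hv⟩ := (Set.ne_univ_iff_exists_notMem _).mp hAu
        have hv1 : v ∈ w₁.B := by
          rcases w₁.mem_A_or_B v with h | h
          · exact absurd (Or.inl h) hv
          · exact h
        have hv2 : v ∈ (w₂.join (σ.join (T Z).inv)).A := Or.inl (hle.1 hv1)
        rw [← heq] at hv2
        exact hv hv2
    · have hE2' : (w₂.join (σ.join (T Z).inv)).inv ∈ R := by rw [← heq]; exact hE1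
      have h3' := hprof.1.2.2 _ hE2 hE2'
      have hAB : (w₂.join (σ.join (T Z).inv)).B = (w₂.join (σ.join (T Z).inv)).A :=
        congrArg GraphSep.A h3'
      have hAu : (w₂.join (σ.join (T Z).inv)).A = Set.univ := by
        have hu := (w₂.join (σ.join (T Z).inv)).union_eq
        rw [hAB, Set.union_self] at hu
        exact hu
      exact hreg _ hE2 hAu
  -- the profile property
  have hpp : ∀ w₁ ∈ Q, ∀ w₂ ∈ Q, (w₁.join w₂).inv ∉ Q := by
    intro w₁ hw₁ w₂ hw₂ hw₃
    obtain ⟨Z, ⟨h1, h2, h3, hE1⟩, ⟨-, h2', -, hE2⟩, ⟨-, h2'', -, hE3⟩⟩ :=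
      Ultrafilter.nonempty_of_mem
        (Filter.inter_mem hw₁.2 (Filter.inter_mem hw₂.2 hw₃.2))
    -- f := E w₁ ∨ E w₂ ∈ R
    have hford : ((w₁.join (σ.join (T Z).inv)).join (w₂.join (σ.join (T Z).inv))).order
        < (kR : ℕ∞) := by
      have hsub3 : ((w₁.join (σ.join (T Z).inv)).join (w₂.join (σ.join (T Z).inv))).A
          ∩ ((w₁.join (σ.join (T Z).inv)).join (w₂.join (σ.join (T Z).inv))).B
          ⊆ (T Z).A ∩ (T Z).B := by
        rintro x ⟨hx1, ⟨hw1B, hσB, htA⟩, ⟨hw2B, -, -⟩⟩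
        refine ⟨htA, ?_⟩
        rcases hx1 with (h | h | h) | (h | h | h)
        · exact (keyB Z x (h2 ⟨h, hw1B⟩)).mpr hσB
        · exact (keyB Z x (h1 ⟨h, hσB⟩)).mpr hσB
        · exact h
        · exact (keyB Z x (h2' ⟨h, hw2B⟩)).mpr hσB
        · exact (keyB Z x (h1 ⟨h, hσB⟩)).mpr hσB
        · exact h
      calc ((w₁.join (σ.join (T Z).inv)).join (w₂.join (σ.join (T Z).inv))).order
          ≤ ((T Z).A ∩ (T Z).B).encard := Set.encard_mono hsub3
        _ = (T Z).inv.order := by rw [order_eq, inv_A', inv_B', Set.inter_comm]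
        _ < (kR : ℕ∞) := hprof.1.1 _ h3
    have hfinv := hprof.2.2 _ hE1 _ hE2
    have hf : (w₁.join (σ.join (T Z).inv)).join (w₂.join (σ.join (T Z).inv)) ∈ R := by
      rcases hprof.1.2.1 _ hford with h | h
      · exact h
      · exact absurd h hfinv
    refine univ_join_clash hprof hreg hf hE3 ?_ ?_
    · apply Set.eq_univ_of_forall
      intro x
      rcases w₁.mem_A_or_B x with h | h
      · exact Or.inl (Or.inl (Or.inl h))
      · rcases w₂.mem_A_or_B x with h' | h'
        · exact Or.inl (Or.inr (Or.inl h'))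
        · exact Or.inr (Or.inl ⟨h, h'⟩)
    · have hsub4 : (((w₁.join (σ.join (T Z).inv)).join (w₂.join (σ.join (T Z).inv))).join
          (((w₁.join w₂).inv).join (σ.join (T Z).inv))).A
          ∩ (((w₁.join (σ.join (T Z).inv)).join (w₂.join (σ.join (T Z).inv))).join
          (((w₁.join w₂).inv).join (σ.join (T Z).inv))).B ⊆ σ.A ∩ σ.B := by
        rintro x ⟨-, ⟨⟨hw1B, hσB, htA⟩, ⟨hw2B, -, -⟩⟩, ⟨hx12, -, -⟩⟩
        have hxZ : x ∈ (Z : Set V) := by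
          rcases hx12 with h | h
          · exact h2 ⟨h, hw1B⟩
          · exact h2' ⟨h, hw2B⟩
        exact ⟨(keyA Z x hxZ).mp htA, hσB⟩
      calc (((w₁.join (σ.join (T Z).inv)).join (w₂.join (σ.join (T Z).inv))).join
          (((w₁.join w₂).inv).join (σ.join (T Z).inv))).order
          ≤ (σ.A ∩ σ.B).encard := Set.encard_mono hsub4
        _ < (kR : ℕ∞) := hσord
  -- R ⊆ Q
  have hRQ : R ⊆ Q := by
    intro w hw
    have hword : w.order < (kR : ℕ∞) := hprof.1.1 w hw
    have hwtop : w.order < ⊤ := lt_of_lt_of_le hword le_top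
    refine ⟨hwtop, ?_⟩
    refine Filter.mem_of_superset (hM w hwtop) ?_
    rintro Z ⟨h1, h2, h3⟩
    have hρ := keyρ Z h1 h3
    have hinv : (w.join (σ.join (T Z).inv)).inv ∉ R := hprof.2.2 w hw _ hρ
    refine ⟨h1, h2, h3, ?_⟩
    rcases hprof.1.2.1 _ (keyEord Z w h1 h2 h3) with h | h
    · exact h
    · exact absurd h hinv
  refine ⟨Q, ⟨⟨fun w hw => hw.1, fun w hw => htot w hw,
    fun w hw hwi => absurd hwi (fun h => hnotboth w hw h)⟩, hcons, hpp⟩, hRQ⟩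

end GraphSep
namespace GraphSep

variable {V : Type} {G : SimpleGraph V}

lemma badCase (P P' : Set (GraphSep G)) (kP kP' : ℕ)
    (hkP : IsProfile (kP : ℕ∞) P) (hkP' : IsProfile (kP' : ℕ∞) P')
    (hreg : RegularP P) (hreg' : RegularP P')
    (hnb : ∀ Q : Set (GraphSep G), IsProfile ⊤ Q → ¬ P ⊆ Q)
    (hnb' : ∀ Q : Set (GraphSep G), IsProfile ⊤ Q → ¬ P' ⊆ Q)
    (σ : GraphSep G) (hσP : σ ∈ P) (hσP' : σ ∈ P')
    (T : Finset V → GraphSep G)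
    (hTdist : ∀ Z : Finset V, Distinguishes (T Z) P P')
    (hagree : ∀ Z : Finset V, (T Z).A ∩ ↑Z = σ.A ∩ ↑Z ∧ (T Z).B ∩ ↑Z = σ.B ∩ ↑Z) :
    False := by
  obtain ⟨U, hUtop⟩ := Ultrafilter.exists_le (Filter.atTop : Filter (Finset V))
  have hsplit : {Z : Finset V | (T Z).inv ∈ P} ∪ {Z : Finset V | (T Z).inv ∈ P'} ∈ U := by
    refine Filter.mem_of_superset Filter.univ_mem ?_
    intro Z _
    rcases hTdist Z with ⟨-, h⟩ | ⟨h, -⟩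
    · exact Or.inr h
    · exact Or.inl h
  rcases Ultrafilter.union_mem_iff.mp hsplit with hc | hc
  · obtain ⟨Q, hQ, hPQ⟩ := buildQ P kP hkP hreg σ hσP T hagree U hUtop hc
    exact hnb Q hQ hPQ
  · obtain ⟨Q, hQ, hPQ⟩ := buildQ P' kP' hkP' hreg' σ hσP' T hagree U hUtop hc
    exact hnb' Q hQ hPQ

end GraphSep
open GraphSep in
/-- the set of separations efficiently distinguishing two distinguishable
regular bounded profiles is closed under taking limits. -/
theorem stmt10 {V : Type} (G : SimpleGraph V) (hG : G.Connected)
    (P P' : Set (GraphSep G))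
    (hP : IsProfileIn G P) (hP' : IsProfileIn G P')
    (hreg : RegularP P) (hreg' : RegularP P')
    (hbdd : BoundedP P) (hbdd' : BoundedP P')
    (hdist : Distinguishable P P')
    (s : GraphSep G)
    (hlim : ∀ Z : Set V, Z.Finite →
      ∃ t : GraphSep G, EffDist t P P' ∧ t.A ∩ Z = s.A ∩ Z ∧ t.B ∩ Z = s.B ∩ Z) :
    EffDist s P P' := by

  classical
  obtain ⟨t₀, ht₀E, -, -⟩ := hlim ∅ Set.finite_empty
  obtain ⟨r₀, hr₀ord, hr₀dist⟩ := hdist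
  have hktop : t₀.order < ⊤ := lt_of_le_of_lt (ht₀E.2 r₀ hr₀dist) hr₀ord
  -- Step A : s.order ≤ t₀.order
  have hsle : s.order ≤ t₀.order := by
    by_contra hlt
    push_neg at hlt
    have hle1 : t₀.order + 1 ≤ s.order := (ENat.add_one_le_iff hktop.ne).mpr hlt
    obtain ⟨Z, hZsub, hZcard⟩ := Set.exists_subset_encard_eq hle1
    have hZfin : Z.Finite := by
      rw [← Set.encard_ne_top_iff, hZcard]
      intro h
      exact hktop.ne (by exact (WithTop.add_eq_top.mp h).resolve_right (by exact ENat.one_ne_top))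
    obtain ⟨t, htE, htA, htB⟩ := hlim Z hZfin
    have hZt : Z ⊆ t.A ∩ t.B := by
      intro x hx
      have hxA : x ∈ s.A ∩ Z := ⟨(hZsub hx).1, hx⟩
      have hxB : x ∈ s.B ∩ Z := ⟨(hZsub hx).2, hx⟩
      rw [← htA] at hxA; rw [← htB] at hxB
      exact ⟨hxA.1, hxB.1⟩
    have h1 : t₀.order + 1 ≤ t.order := by
      rw [← hZcard]; exact Set.encard_mono hZt
    have h2 : t.order ≤ t₀.order := htE.2 t₀ ht₀E.1
    have h3 : t₀.order + 1 ≤ t₀.order := h1.trans h2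
    have h4 : t₀.order < t₀.order := (ENat.add_one_le_iff hktop.ne).mp h3
    exact lt_irrefl _ h4
  obtain ⟨kP, hkP⟩ := hbdd.1
  obtain ⟨kP', hkP'⟩ := hbdd'.1
  have ht₀P : t₀ ∈ P ∨ t₀.inv ∈ P := by
    rcases ht₀E.1 with ⟨h, -⟩ | ⟨h, -⟩
    · exact Or.inl h
    · exact Or.inr h
  have ht₀P' : t₀ ∈ P' ∨ t₀.inv ∈ P' := by
    rcases ht₀E.1 with ⟨-, h⟩ | ⟨-, h⟩
    · exact Or.inr h
    · exact Or.inl h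
  have hkPk : t₀.order < (kP : ℕ∞) := by
    rcases ht₀P with h | h
    · exact hkP.1.1 _ h
    · have := hkP.1.1 _ h; rwa [order_inv'] at this
  have hkPk' : t₀.order < (kP' : ℕ∞) := by
    rcases ht₀P' with h | h
    · exact hkP'.1.1 _ h
    · have := hkP'.1.1 _ h; rwa [order_inv'] at this
  have hsP : s ∈ P ∨ s.inv ∈ P := hkP.1.2.1 s (lt_of_le_of_lt hsle hkPk)
  have hsP' : s ∈ P' ∨ s.inv ∈ P' := hkP'.1.2.1 s (lt_of_le_of_lt hsle hkPk')
  -- choice of approximating separations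
  have hsel : ∀ Z : Finset V, ∃ t : GraphSep G, EffDist t P P' ∧
      t.A ∩ ↑Z = s.A ∩ ↑Z ∧ t.B ∩ ↑Z = s.B ∩ ↑Z := fun Z => hlim ↑Z (Z.finite_toSet)
  choose T hT1 hT2 hT3 using hsel
  have heff : ∀ t : GraphSep G, Distinguishes t P P' → s.order ≤ t.order :=
    fun t ht => hsle.trans (ht₀E.2 t ht)
  rcases hsP with hs | hs <;> rcases hsP' with hs' | hs'
  · -- s ∈ P and s ∈ P' : bad case
    exact absurd (badCase P P' kP kP' hkP hkP' hreg hreg' hbdd.2 hbdd'.2 s hs hs'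
      T (fun Z => (hT1 Z).1) (fun Z => ⟨hT2 Z, hT3 Z⟩)) (fun h => h.elim)
  · exact ⟨Or.inl ⟨hs, hs'⟩, heff⟩
  · exact ⟨Or.inr ⟨hs, hs'⟩, heff⟩
  · -- s.inv ∈ P and s.inv ∈ P' : bad case for s.inv
    refine absurd (badCase P P' kP kP' hkP hkP' hreg hreg' hbdd.2 hbdd'.2 s.inv hs hs'
      (fun Z => (T Z).inv) ?_ ?_) (fun h => h.elim)
    · intro Z
      rcases (hT1 Z).1 with ⟨h1, h2⟩ | ⟨h1, h2⟩
      · exact Or.inr ⟨show (T Z).inv.inv ∈ P by rw [inv_inv']; exact h1, h2⟩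
      · exact Or.inl ⟨h1, show (T Z).inv.inv ∈ P' by rw [inv_inv']; exact h2⟩
    · intro Z
      exact ⟨hT3 Z, hT2 Z⟩
end

section
/- Let G be a connected graph and P, P', Q, Q' robust profiles in G. If (A,B) distinguishes P and P' efficiently, (C,D) distinguishes Q and Q' efficiently, and |(A,B)| < |(C,D)|, then some corner separation of (A,B) and (C,D) distinguishes Q and Q' efficiently. -/
namespace GraphSep

variable {V : Type} {G : SimpleGraph V}

lemma submod' (s t : GraphSep G) :
    (s.join t).order + (s.inv.join t.inv).order ≤ s.order + t.order := by
  show ((s.A ∪ t.A) ∩ (s.B ∩ t.B)).encard + ((s.B ∪ t.B) ∩ (s.A ∩ t.A)).encard ≤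
    (s.A ∩ s.B).encard + (t.A ∩ t.B).encard
  set U := (s.A ∪ t.A) ∩ (s.B ∩ t.B) with hU
  set W := (s.B ∪ t.B) ∩ (s.A ∩ t.A) with hW
  have h1 : U ∪ W ⊆ (s.A ∩ s.B) ∪ (t.A ∩ t.B) := by
    rintro x (⟨hA | hA, hB, hD⟩ | ⟨hB | hB, hA, hC⟩)
    · exact Or.inl ⟨hA, hB⟩
    · exact Or.inr ⟨hA, hD⟩
    · exact Or.inl ⟨hA, hB⟩
    · exact Or.inr ⟨hC, hB⟩
  have h2 : U ∩ W ⊆ (s.A ∩ s.B) ∩ (t.A ∩ t.B) := by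
    rintro x ⟨⟨_, hB, hD⟩, _, hA, hC⟩
    exact ⟨⟨hA, hB⟩, hC, hD⟩
  calc U.encard + W.encard = (U ∪ W).encard + (U ∩ W).encard :=
        (Set.encard_union_add_encard_inter U W).symm
    _ ≤ ((s.A ∩ s.B) ∪ (t.A ∩ t.B)).encard + ((s.A ∩ s.B) ∩ (t.A ∩ t.B)).encard :=
        add_le_add (Set.encard_mono h1) (Set.encard_mono h2)
    _ = _ := Set.encard_union_add_encard_inter _ _

lemma dist_symm' {c : GraphSep G} {Q Q' : Set (GraphSep G)}
    (h : Distinguishes c Q' Q) : Distinguishes c Q Q' :=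
  h.elim (fun ⟨a, b⟩ => Or.inr ⟨b, a⟩) (fun ⟨a, b⟩ => Or.inl ⟨b, a⟩)

lemma isCornerSep_inv_left {s t c : GraphSep G} (h : IsCornerSep s.inv t c) :
    IsCornerSep s t c := by
  obtain ⟨s', hs', t', ht', hc⟩ := h
  refine ⟨s', ?_, t', ht', hc⟩
  simp only [Set.mem_insert_iff, Set.mem_singleton_iff, inv_inv'] at hs' ⊢
  tauto

/-- Key lemma, with everything suitably oriented. -/
lemma main_lemma {Q Q' R R' : Set (GraphSep G)} {kQ kQ' kR' : ℕ∞}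
    (hQp : IsProfile kQ Q) (hQ'p : IsProfile kQ' Q') (hR'p : IsProfile kR' R')
    (hRr : RobustP R)
    (s t : GraphSep G)
    (hsR : s.inv ∈ R) (hsR' : s ∈ R')
    (hmin : ∀ d : GraphSep G, Distinguishes d R R' → s.order ≤ d.order)
    (htQ : t ∈ Q) (htQ' : t.inv ∈ Q')
    (ht2 : ∀ d : GraphSep G, Distinguishes d Q Q' → t.order ≤ d.order)
    (hsQ : s ∈ Q) (hsQ' : s ∈ Q')
    (hlt : s.order < t.order) :
    ∃ c : GraphSep G, IsCornerSep s t c ∧ EffDist c Q Q' := by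
  have htkQ : t.order < kQ := hQp.1.1 t htQ
  have htkQ' : t.order < kQ' := by
    have := hQ'p.1.1 t.inv htQ'
    rwa [order_inv'] at this
  have httop : t.order < ⊤ := lt_of_lt_of_le htkQ le_top
  have httop' : t.order ≠ ⊤ := ne_of_lt httop
  have hstop : s.order < ⊤ := hlt.trans httop
  have hskR' : s.order < kR' := hR'p.1.1 s hsR'
  -- one of the two corners pointing towards t has order ≤ t.order
  have key : (s.join t).order ≤ t.order ∨ (s.join t.inv).order ≤ t.order := by
    by_contra hcon
    push_neg at hcon
    obtain ⟨h1, h2⟩ := hcon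
    -- derive that both opposite corners have small order
    have small : ∀ u : GraphSep G, t.order < (s.join u).order →
        (s.join u).order + (s.inv.join u.inv).order ≤ s.order + t.order →
        (s.inv.join u.inv).order < s.order := by
      intro u hu hsub
      have h3 : t.order + 1 ≤ (s.join u).order := (ENat.add_one_le_iff httop').mpr hu
      have h4 : t.order + 1 + (s.inv.join u.inv).order ≤ t.order + s.order := by
        calc t.order + 1 + (s.inv.join u.inv).order
            ≤ (s.join u).order + (s.inv.join u.inv).order := add_le_add_left h3 _
          _ ≤ s.order + t.order := hsub
          _ = t.order + s.order := add_comm _ _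
      rw [add_assoc] at h4
      have h5 : 1 + (s.inv.join u.inv).order ≤ s.order :=
        (WithTop.add_le_add_iff_left httop').mp h4
      rw [add_comm] at h5
      have hne : (s.inv.join u.inv).order ≠ ⊤ := by
        intro hh
        rw [hh] at h5
        rw [top_add] at h5
        exact hstop.ne (top_le_iff.mp h5)
      exact (ENat.add_one_le_iff hne).mp h5
    have hf1 : (s.inv.join t.inv).order < s.order := small t h1 (submod' s t)
    have hf2 : (s.inv.join t).order < s.order := by
      have := small t.inv h2 ?_
      · rwa [inv_inv'] at this
      · rw [inv_inv']
        calc (s.join t.inv).order + (s.inv.join t).order ≤ s.order + t.inv.order :=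
              submod' s t.inv
          _ = s.order + t.order := by rw [order_inv']
    -- robustness of R yields a small distinguisher of R, R'
    have hrob := hRr s.inv hsR t httop ?_ ?_
    rotate_left
    · rwa [order_inv']
    · rwa [order_inv']
    -- contradiction helper
    have contra : ∀ f : GraphSep G, f ∈ R → f.order < s.order →
        s.B ⊆ f.A → f.B ⊆ s.A → False := by
      intro f hfR hford hle1 hle2
      have hfk : f.order < kR' := hford.trans hskR'
      rcases hR'p.1.2.1 f hfk with hfR' | hfR'
      · rcases hR'p.2.1 s hsR' f hfR' ⟨hle1, hle2⟩ with h | h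
        · exact absurd (h ▸ hford) (lt_irrefl _)
        · rw [h, order_inv'] at hford
          exact absurd hford (lt_irrefl _)
      · have : Distinguishes f R R' := Or.inl ⟨hfR, hfR'⟩
        exact absurd (hmin f this) (not_le.mpr hford)
    rcases hrob with hr | hr
    · exact contra _ hr hf2 Set.subset_union_left Set.inter_subset_left
    · exact contra _ hr hf1 Set.subset_union_left Set.inter_subset_left
  -- now produce the corner
  rcases key with hord | hord
  · -- corner c = s.join t
    set c := s.join t with hc
    have hckQ : c.order < kQ := lt_of_le_of_lt hord htkQ
    have hckQ' : c.order < kQ' := lt_of_le_of_lt hord htkQ'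
    have hcQ : c ∈ Q := by
      rcases hQp.1.2.1 c hckQ with h | h
      · exact h
      · exact absurd h (hQp.2.2 s hsQ t htQ)
    have hdist : Distinguishes c Q Q' := by
      rcases hQ'p.1.2.1 c hckQ' with hcQ' | hcQ'
      · rcases hQ'p.2.1 t.inv htQ' c hcQ'
            ⟨Set.subset_union_right, Set.inter_subset_right⟩ with h | h
        · exact Or.inr ⟨by rw [← h, inv_inv']; exact htQ, hcQ'⟩
        · have htc : t = c := by rw [← inv_inv' t, h, inv_inv']
          exact Or.inl ⟨hcQ, htc ▸ htQ'⟩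
      · exact Or.inl ⟨hcQ, hcQ'⟩
    exact ⟨c, ⟨s, Or.inl rfl, t, Or.inl rfl, Or.inl rfl⟩,
      hdist, fun d hd => le_trans (le_trans hord (ht2 d hd)) (le_refl _)⟩
  · -- corner c = s.join t.inv
    set c := s.join t.inv with hc
    have hckQ : c.order < kQ := lt_of_le_of_lt hord htkQ
    have hckQ' : c.order < kQ' := lt_of_le_of_lt hord htkQ'
    have hcQ' : c ∈ Q' := by
      rcases hQ'p.1.2.1 c hckQ' with h | h
      · exact h
      · exact absurd h (hQ'p.2.2 s hsQ' t.inv htQ')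
    have hdist : Distinguishes c Q Q' := by
      rcases hQp.1.2.1 c hckQ with hcQ | hcQ
      · rcases hQp.2.1 t htQ c hcQ
            ⟨Set.subset_union_right, Set.inter_subset_right⟩ with h | h
        · exact Or.inl ⟨hcQ, by rw [← h]; exact htQ'⟩
        · have htc : c = t.inv := by rw [h, inv_inv']
          exact Or.inr ⟨by rw [htc, inv_inv']; exact htQ, hcQ'⟩
      · exact Or.inr ⟨hcQ, hcQ'⟩
    exact ⟨c, ⟨s, Or.inl rfl, t.inv, Or.inr rfl, Or.inl rfl⟩,
      hdist, fun d hd => le_trans hord (ht2 d hd)⟩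

end GraphSep

open GraphSep in
/-- if `(A,B)` efficiently distinguishes `P,P'`, `(C,D)` efficiently
distinguishes `Q,Q'` and `|(A,B)| < |(C,D)|`, then some corner separation of the two
efficiently distinguishes `Q` and `Q'`. -/
theorem stmt11 {V : Type} (G : SimpleGraph V) (hG : G.Connected)
    (P P' Q Q' : Set (GraphSep G))
    (hP : IsProfileIn G P) (hP' : IsProfileIn G P')
    (hQ : IsProfileIn G Q) (hQ' : IsProfileIn G Q')
    (hPr : RobustP P) (hP'r : RobustP P') (hQr : RobustP Q) (hQ'r : RobustP Q')
    (s t : GraphSep G)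
    (hs : EffDist s P P') (ht : EffDist t Q Q')
    (hlt : s.order < t.order) :
    ∃ c : GraphSep G, IsCornerSep s t c ∧ EffDist c Q Q' := by
  obtain ⟨kP, hPp⟩ := hP
  obtain ⟨kP', hP'p⟩ := hP'
  obtain ⟨kQ, hQp⟩ := hQ
  obtain ⟨kQ', hQ'p⟩ := hQ'
  -- a version with t oriented: t ∈ Q₁, t.inv ∈ Q₂
  have core : ∀ (Q₁ Q₂ : Set (GraphSep G)) (k₁ k₂ : ℕ∞),
      IsProfile k₁ Q₁ → IsProfile k₂ Q₂ → t ∈ Q₁ → t.inv ∈ Q₂ →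
      (∀ d : GraphSep G, Distinguishes d Q₁ Q₂ → t.order ≤ d.order) →
      ∃ c : GraphSep G, IsCornerSep s t c ∧ EffDist c Q₁ Q₂ := by
    intro Q₁ Q₂ k₁ k₂ hQ₁ hQ₂ htQ htQ' ht2
    have htk₁ : t.order < k₁ := hQ₁.1.1 t htQ
    have htk₂ : t.order < k₂ := by
      have := hQ₂.1.1 t.inv htQ'
      rwa [order_inv'] at this
    have hsk₁ : s.order < k₁ := hlt.trans htk₁
    have hsk₂ : s.order < k₂ := hlt.trans htk₂
    -- orient s the same way in both Q₁ and Q₂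
    have hsorient : (s ∈ Q₁ ∧ s ∈ Q₂) ∨ (s.inv ∈ Q₁ ∧ s.inv ∈ Q₂) := by
      rcases hQ₁.1.2.1 s hsk₁ with h1 | h1 <;> rcases hQ₂.1.2.1 s hsk₂ with h2 | h2
      · exact Or.inl ⟨h1, h2⟩
      · exact absurd (ht2 s (Or.inl ⟨h1, h2⟩)) (not_le.mpr hlt)
      · exact absurd (ht2 s (Or.inr ⟨h1, h2⟩)) (not_le.mpr hlt)
      · exact Or.inr ⟨h1, h2⟩
    rcases hsorient with ⟨h1, h2⟩ | ⟨h1, h2⟩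
    · rcases hs.1 with ⟨hp, hp'⟩ | ⟨hp, hp'⟩
      · exact main_lemma hQ₁ hQ₂ hPp hP'r s t hp' hp
          (fun d hd => hs.2 d (dist_symm' hd)) htQ htQ' ht2 h1 h2 hlt
      · exact main_lemma hQ₁ hQ₂ hP'p hPr s t hp hp'
          (fun d hd => hs.2 d hd) htQ htQ' ht2 h1 h2 hlt
    · have hlt' : s.inv.order < t.order := by rwa [order_inv']
      rcases hs.1 with ⟨hp, hp'⟩ | ⟨hp, hp'⟩
      · obtain ⟨c, hc1, hc2⟩ := main_lemma hQ₁ hQ₂ hP'p hPr s.inv t hp hp'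
          (fun d hd => by rw [order_inv']; exact hs.2 d hd) htQ htQ' ht2 h1 h2 hlt'
        exact ⟨c, isCornerSep_inv_left hc1, hc2⟩
      · obtain ⟨c, hc1, hc2⟩ := main_lemma hQ₁ hQ₂ hPp hP'r s.inv t hp' hp
          (fun d hd => by rw [order_inv']; exact hs.2 d (dist_symm' hd)) htQ htQ' ht2 h1 h2 hlt'
        exact ⟨c, isCornerSep_inv_left hc1, hc2⟩
  rcases ht.1 with ⟨htQ, htQ'⟩ | ⟨htQ, htQ'⟩
  · exact core Q Q' kQ kQ' hQp hQ'p htQ htQ' ht.2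
  · obtain ⟨c, hc1, hc2⟩ := core Q' Q kQ' kQ hQ'p hQp htQ' htQ
      (fun d hd => ht.2 d (dist_symm' hd))
    exact ⟨c, hc1, dist_symm' hc2.1, fun d hd => hc2.2 d (dist_symm' hd)⟩
end

section
/- Let G be a connected graph and (A,B), (A',B') two tight separations of G of finite order. Then either (A',B') is nested with (A,B), or the separator A'∩B' is a ⊆-minimal x–y-separator in G for some pair of vertices x,y from (A∩B) ∪ N(A∩B). -/
section Stmt15Aux

open GraphSep

variable {V : Type} {G : SimpleGraph V}

lemma GraphSepAux.mem_side (s : GraphSep G) {v : V} (hv : v ∉ s.sepSet) :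
    v ∈ s.A \ s.B ∨ v ∈ s.B \ s.A := by
  rcases s.mem_A_or_B v with h | h
  · by_cases hb : v ∈ s.B
    · exact absurd ⟨h, hb⟩ hv
    · exact Or.inl ⟨h, hb⟩
  · by_cases ha : v ∈ s.A
    · exact absurd ⟨ha, h⟩ hv
    · exact Or.inr ⟨h, ha⟩

lemma GraphSepAux.walk_side (s : GraphSep G) :
    ∀ {u w : V} (p : G.Walk u w), (∀ v ∈ p.support, v ∉ s.sepSet) →
      u ∈ s.A \ s.B → w ∈ s.A \ s.B := by
  intro u w p
  induction p with
  | nil => exact fun _ hu => hu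
  | @cons a b c h q ih =>
    intro hp hu
    have hb : b ∉ s.sepSet := hp b (List.mem_cons_of_mem _ q.start_mem_support)
    refine ih (fun v hv => hp v (List.mem_cons_of_mem _ hv)) ?_
    rcases GraphSepAux.mem_side s hb with hside | hside
    · exact hside
    · exact absurd h (s.no_edge a hu b hside)

lemma GraphSepAux.comp_witness {X C : Set V} (hC : IsCompOf G X C) : ∃ v ∈ C, True := by
  obtain ⟨v, hv, rfl⟩ := hC
  refine ⟨v, ⟨SimpleGraph.Walk.nil, ?_⟩, trivial⟩
  intro u hu
  rw [SimpleGraph.Walk.support_nil, List.mem_singleton] at hu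
  subst hu; exact hv

lemma GraphSepAux.comp_not_mem {X C : Set V} (hC : IsCompOf G X C) {c : V} (hc : c ∈ C) :
    c ∉ X := by
  obtain ⟨v, hv, rfl⟩ := hC
  obtain ⟨p, hp⟩ := hc
  exact hp c p.end_mem_support

lemma GraphSepAux.comp_walk {X C : Set V} (hC : IsCompOf G X C) {c d : V}
    (hc : c ∈ C) (hd : d ∈ C) : ∃ p : G.Walk c d, ∀ u ∈ p.support, u ∉ X := by
  obtain ⟨v, hv, rfl⟩ := hC
  obtain ⟨p, hp⟩ := hc
  obtain ⟨q, hq⟩ := hd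
  refine ⟨p.reverse.append q, ?_⟩
  intro u hu
  rw [SimpleGraph.Walk.mem_support_append_iff] at hu
  rcases hu with hu | hu
  · rw [SimpleGraph.Walk.support_reverse, List.mem_reverse] at hu
    exact hp u hu
  · exact hq u hu

lemma GraphSepAux.comp_support_subset {X C : Set V} (hC : IsCompOf G X C) {c d : V}
    (p : G.Walk c d) (hc : c ∈ C) (hp : ∀ u ∈ p.support, u ∉ X) :
    ∀ u ∈ p.support, u ∈ C := by
  classical
  obtain ⟨v, hv, rfl⟩ := hC
  obtain ⟨q, hq⟩ := hc
  intro u hu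
  refine ⟨q.append (p.takeUntil u hu), ?_⟩
  intro w hw
  rw [SimpleGraph.Walk.mem_support_append_iff] at hw
  rcases hw with hw | hw
  · exact hq w hw
  · exact hp w (SimpleGraph.Walk.support_takeUntil_subset _ _ hw)

lemma GraphSepAux.comp_adj_closed {X C : Set V} (hC : IsCompOf G X C) {c u : V}
    (hc : c ∈ C) (hu : u ∉ X) (h : G.Adj c u) : u ∈ C := by
  obtain ⟨v, hv, rfl⟩ := hC
  obtain ⟨p, hp⟩ := hc
  refine ⟨p.append (SimpleGraph.Walk.cons h SimpleGraph.Walk.nil), ?_⟩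
  intro w hw
  rw [SimpleGraph.Walk.mem_support_append_iff] at hw
  rcases hw with hw | hw
  · exact hp w hw
  · rw [SimpleGraph.Walk.support_cons, SimpleGraph.Walk.support_nil,
      List.mem_cons, List.mem_singleton] at hw
    rcases hw with hw | hw
    · exact hp w (hw ▸ p.end_mem_support)
    · exact hw ▸ hu

lemma GraphSepAux.comp_boundary_aux {X C : Set V} (hC : IsCompOf G X C) :
    ∀ {b w : V} (_ : G.Walk b w), b ∈ C → w ∉ C → ∃ e ∈ C, ∃ u ∈ X, G.Adj e u := by
  intro b w p
  induction p with
  | nil => exact fun hb hw => absurd hb hw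
  | @cons a b' c h q ih =>
    intro hb hw
    by_cases hbX : b' ∈ X
    · obtain ⟨v, hv, rfl⟩ := hC
      exact ⟨a, hb, b', hbX, h⟩
    · exact ih (GraphSepAux.comp_adj_closed hC hb hbX h) hw

lemma GraphSepAux.comp_boundary (hG : G.Connected) {X C : Set V} (hC : IsCompOf G X C)
    {w : V} (hw : w ∉ C) : ∃ e ∈ C, ∃ u ∈ X, G.Adj e u := by
  obtain ⟨b, hb, -⟩ := GraphSepAux.comp_witness hC
  obtain ⟨p⟩ := hG.preconnected b w
  exact GraphSepAux.comp_boundary_aux hC p hb hw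

/-- Core nesting step. -/
lemma GraphSepAux.core (hG : G.Connected) (s t : GraphSep G)
    {D : Set V} (hD : IsCompOf G s.sepSet D) (hDn : nbhd G D = s.sepSet)
    (hDsub : D ⊆ s.B \ s.A)
    (hS : t.sepSet ⊆ s.A \ s.B)
    {d0 : V} (hd0 : d0 ∈ D) (hd0side : d0 ∈ t.B \ t.A)
    {u0 : V} (hu0 : u0 ∈ t.sepSet) :
    t.A ⊆ s.A ∧ s.B ⊆ t.B := by
  have hDS : ∀ d ∈ D, d ∉ t.sepSet := fun d hd hds => (hS hds).2 (hDsub hd).1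
  -- D lies in t.B \ t.A
  have hD' : D ⊆ t.B \ t.A := by
    intro d hd
    obtain ⟨p, hp⟩ := GraphSepAux.comp_walk hD hd0 hd
    have hsup := GraphSepAux.comp_support_subset hD p hd0 hp
    have hp' : ∀ v ∈ p.support, v ∉ t.inv.sepSet :=
      fun v hv h => hDS v (hsup v hv) ⟨h.2, h.1⟩
    exact GraphSepAux.walk_side t.inv p hp' hd0side
  -- the separator of s lies in t.B \ t.A
  have hX' : s.sepSet ⊆ t.B \ t.A := by
    intro x hx
    have hx' : x ∈ nbhd G D := hDn ▸ hx
    obtain ⟨hxD, d, hd, hadj⟩ := hx'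
    have hxS : x ∉ t.sepSet := fun h => (hS h).2 hx.2
    rcases GraphSepAux.mem_side t hxS with hside | hside
    · exact absurd hadj (t.no_edge x hside d (hD' hd))
    · exact hside
  -- every vertex of s.B \ s.A lies in t.B \ t.A
  have hBA' : s.B \ s.A ⊆ t.B \ t.A := by
    intro b hb
    have hbX : b ∉ s.sepSet := fun h => hb.2 h.1
    set E : Set V := {w | AvoidReach G s.sepSet b w} with hEdef
    have hE : IsCompOf G s.sepSet E := ⟨b, hbX, rfl⟩
    have hbE : b ∈ E := by
      refine ⟨SimpleGraph.Walk.nil, ?_⟩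
      intro u hu
      rw [SimpleGraph.Walk.support_nil, List.mem_singleton] at hu
      exact hu ▸ hbX
    have hEsub : E ⊆ s.B \ s.A := by
      intro e he
      obtain ⟨p, hp⟩ := he
      have hp' : ∀ v ∈ p.support, v ∉ s.inv.sepSet := fun v hv h => hp v hv ⟨h.2, h.1⟩
      exact GraphSepAux.walk_side s.inv p hp' hb
    have hES : ∀ e ∈ E, e ∉ t.sepSet := fun e he hts => (hS hts).2 (hEsub he).1
    have hu0E : u0 ∉ E := fun h => (hS hu0).2 (hEsub h).1
    obtain ⟨e, he, u, huX, headj⟩ := GraphSepAux.comp_boundary hG hE hu0E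
    have heside : e ∈ t.B \ t.A := by
      rcases GraphSepAux.mem_side t (hES e he) with hside | hside
      · exact absurd headj (t.no_edge e hside u (hX' huX))
      · exact hside
    obtain ⟨q, hq⟩ := GraphSepAux.comp_walk hE he hbE
    have hsup := GraphSepAux.comp_support_subset hE q he hq
    have hq' : ∀ v ∈ q.support, v ∉ t.inv.sepSet :=
      fun v hv h => hES v (hsup v hv) ⟨h.2, h.1⟩
    exact GraphSepAux.walk_side t.inv q hq' heside
  have hall : s.B ⊆ t.B \ t.A := by
    intro b hb
    by_cases ha : b ∈ s.A
    · exact hX' ⟨ha, hb⟩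
    · exact hBA' ⟨hb, ha⟩
  constructor
  · intro a ha
    rcases s.mem_A_or_B a with h | h
    · exact h
    · exact absurd ha (hall h).2
  · exact fun b hb => (hall hb).1

/-- If some tight component of `s'` misses the closed neighbourhood of `sepSet s`,
then `s'` is nested with `s`. -/
lemma GraphSepAux.nested_of_miss (hG : G.Connected) (s s' : GraphSep G)
    (hs : IsTight s) (hs' : IsTight s')
    {C : Set V} (hC : IsCompOf G s'.sepSet C) (hCn : nbhd G C = s'.sepSet)
    (hmiss : ∀ c ∈ C, c ∉ s.sepSet ∪ nbhd G s.sepSet) : Nested s' s := by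
  -- the separator of s' is nonempty
  have hne : s'.sepSet.Nonempty := by
    by_contra h
    rw [Set.not_nonempty_iff_eq_empty] at h
    obtain ⟨⟨C1, hC1c, hC1n, hC1s⟩, ⟨C2, hC2c, hC2n, hC2s⟩⟩ := hs'
    obtain ⟨c2, hc2, -⟩ := GraphSepAux.comp_witness hC2c
    obtain ⟨b1, hb1, -⟩ := GraphSepAux.comp_witness hC1c
    obtain ⟨p⟩ := hG.preconnected b1 c2
    have hc2' : c2 ∈ C1 :=
      GraphSepAux.comp_support_subset hC1c p hb1
        (by rw [h]; exact fun u _ hu => hu) c2 p.end_mem_support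
    exact (hC2s hc2).2 (hC1s hc2').1
  obtain ⟨u0, hu0⟩ := hne
  obtain ⟨c0, hc0, -⟩ := GraphSepAux.comp_witness hC
  have hc0X : c0 ∉ s.sepSet := fun h => hmiss c0 hc0 (Or.inl h)
  have hCX : ∀ c ∈ C, c ∉ s.sepSet := fun c hc h => hmiss c hc (Or.inl h)
  -- key: a walk inside C avoids s.sepSet
  have hCwalk : ∀ c ∈ C, ∃ p : G.Walk c0 c, ∀ v ∈ p.support, v ∉ s.sepSet := by
    intro c hc
    obtain ⟨p, hp⟩ := GraphSepAux.comp_walk hC hc0 hc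
    have hsup := GraphSepAux.comp_support_subset hC p hc0 hp
    exact ⟨p, fun v hv => hCX v (hsup v hv)⟩
  rcases GraphSepAux.mem_side s hc0X with hc0side | hc0side
  · -- C ⊆ s.A \ s.B, so s'.sepSet ⊆ s.A \ s.B
    have hCside : C ⊆ s.A \ s.B := by
      intro c hc
      obtain ⟨p, hp⟩ := hCwalk c hc
      exact GraphSepAux.walk_side s p hp hc0side
    have hS' : s'.sepSet ⊆ s.A \ s.B := by
      intro u hu
      have hu' : u ∈ nbhd G C := hCn ▸ hu
      obtain ⟨huC, c, hc, hadj⟩ := hu'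
      have huX : u ∉ s.sepSet := by
        intro hX
        exact hmiss c hc (Or.inr ⟨hCX c hc, u, hX, hadj.symm⟩)
      rcases GraphSepAux.mem_side s huX with hside | hside
      · exact hside
      · exact absurd hadj.symm (s.no_edge c (hCside hc) u hside)
    obtain ⟨D, hD, hDn, hDsub⟩ := hs.2
    obtain ⟨d0, hd0, -⟩ := GraphSepAux.comp_witness hD
    have hd0S : d0 ∉ s'.sepSet := fun h => (hS' h).2 (hDsub hd0).1
    rcases GraphSepAux.mem_side s' hd0S with hside | hside
    · -- d0 ∈ s'.A \ s'.B : use t := s'.inv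
      have h := GraphSepAux.core hG s s'.inv hD hDn hDsub
        (fun v hv => hS' ⟨hv.2, hv.1⟩) hd0 hside ⟨hu0.2, hu0.1⟩
      exact Or.inr (Or.inr (Or.inl h))
    · have h := GraphSepAux.core hG s s' hD hDn hDsub hS' hd0 hside hu0
      exact Or.inl h
  · -- C ⊆ s.B \ s.A : use s.inv
    have hCside : C ⊆ s.B \ s.A := by
      intro c hc
      obtain ⟨p, hp⟩ := hCwalk c hc
      have hp' : ∀ v ∈ p.support, v ∉ s.inv.sepSet := fun v hv h => hp v hv ⟨h.2, h.1⟩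
      exact GraphSepAux.walk_side s.inv p hp' hc0side
    have hS' : s'.sepSet ⊆ s.B \ s.A := by
      intro u hu
      have hu' : u ∈ nbhd G C := hCn ▸ hu
      obtain ⟨huC, c, hc, hadj⟩ := hu'
      have huX : u ∉ s.sepSet := by
        intro hX
        exact hmiss c hc (Or.inr ⟨hCX c hc, u, hX, hadj.symm⟩)
      rcases GraphSepAux.mem_side s huX with hside | hside
      · exact absurd hadj (s.no_edge u hside c (hCside hc))
      · exact hside
    obtain ⟨D, hD, hDn, hDsub⟩ := hs.1
    have hDi : IsCompOf G s.inv.sepSet D := by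
      obtain ⟨v, hv, rfl⟩ := hD
      exact ⟨v, fun h => hv ⟨h.2, h.1⟩, by
        have : s.inv.sepSet = s.sepSet := Set.inter_comm _ _
        rw [this]⟩
    have hDni : nbhd G D = s.inv.sepSet := by
      have : s.inv.sepSet = s.sepSet := Set.inter_comm _ _
      rw [this]; exact hDn
    have hDsubi : D ⊆ s.inv.B \ s.inv.A := hDsub
    obtain ⟨d0, hd0, -⟩ := GraphSepAux.comp_witness hD
    have hd0S : d0 ∉ s'.sepSet := fun h => (hS' h).2 (hDsub hd0).1
    rcases GraphSepAux.mem_side s' hd0S with hside | hside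
    · -- d0 ∈ s'.A \ s'.B : use t := s'.inv
      have h := GraphSepAux.core hG s.inv s'.inv hDi hDni hDsubi
        (fun v hv => hS' ⟨hv.2, hv.1⟩) hd0 hside ⟨hu0.2, hu0.1⟩
      exact Or.inr (Or.inr (Or.inr h))
    · have h := GraphSepAux.core hG s.inv s' hDi hDni hDsubi hS' hd0 hside hu0
      exact Or.inr (Or.inl h)

/-- Minimal separator branch. -/
lemma GraphSepAux.minsep (s' : GraphSep G)
    {C1 C2 : Set V} (hC1c : IsCompOf G s'.sepSet C1) (hC1n : nbhd G C1 = s'.sepSet)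
    (hC1s : C1 ⊆ s'.A \ s'.B)
    (hC2c : IsCompOf G s'.sepSet C2) (hC2n : nbhd G C2 = s'.sepSet)
    (hC2s : C2 ⊆ s'.B \ s'.A)
    {x y : V} (hx : x ∈ C1) (hy : y ∈ C2) :
    MinSeparator G x y s'.sepSet := by
  have hxS : x ∉ s'.sepSet := GraphSepAux.comp_not_mem hC1c hx
  have hyS : y ∉ s'.sepSet := GraphSepAux.comp_not_mem hC2c hy
  constructor
  · refine ⟨hxS, hyS, fun p => ?_⟩
    by_contra h
    push_neg at h
    have := GraphSepAux.walk_side s' p h (hC1s hx)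
    exact (hC2s hy).2 this.1
  · intro S'' hsub hsep
    refine Set.Subset.antisymm hsub fun u huS => ?_
    by_contra huS''
    have hu1 : u ∈ nbhd G C1 := hC1n ▸ huS
    have hu2 : u ∈ nbhd G C2 := hC2n ▸ huS
    obtain ⟨-, c1, hc1, hadj1⟩ := hu1
    obtain ⟨-, c2, hc2, hadj2⟩ := hu2
    obtain ⟨p1, hp1⟩ := GraphSepAux.comp_walk hC1c hx hc1
    obtain ⟨p2, hp2⟩ := GraphSepAux.comp_walk hC2c hc2 hy
    obtain ⟨w, hwmem, hwS⟩ := hsep.2.2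
      (p1.append (SimpleGraph.Walk.cons hadj1.symm (SimpleGraph.Walk.cons hadj2 p2)))
    rw [SimpleGraph.Walk.mem_support_append_iff] at hwmem
    rcases hwmem with hw | hw
    · exact hp1 w hw (hsub hwS)
    · rw [SimpleGraph.Walk.support_cons, SimpleGraph.Walk.support_cons,
        List.mem_cons, List.mem_cons] at hw
      rcases hw with hw | hw
      · exact hp1 w (hw ▸ p1.end_mem_support) (hsub hwS)
      · rcases hw with hw | hw
        · exact huS'' (hw ▸ hwS)
        · exact hp2 w hw (hsub hwS)

end Stmt15Aux

open GraphSep in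
/-- two tight finite-order separations of a connected graph are nested,
or the separator of the second is a minimal `x`–`y`-separator for vertices `x,y` in
the closed neighbourhood of the separator of the first. -/
theorem stmt15 {V : Type} (G : SimpleGraph V) (hG : G.Connected)
    (s s' : GraphSep G)
    (hs : IsTight s) (hs' : IsTight s')
    (hfin : s.order < ⊤) (hfin' : s'.order < ⊤) :
    Nested s' s ∨
      ∃ x ∈ s.sepSet ∪ nbhd G s.sepSet, ∃ y ∈ s.sepSet ∪ nbhd G s.sepSet,
        MinSeparator G x y s'.sepSet := by
  obtain ⟨⟨C1, hC1c, hC1n, hC1s⟩, ⟨C2, hC2c, hC2n, hC2s⟩⟩ := id hs'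
  by_cases h1 : ∀ c ∈ C1, c ∉ s.sepSet ∪ nbhd G s.sepSet
  · exact Or.inl (GraphSepAux.nested_of_miss hG s s' hs hs' hC1c hC1n h1)
  · by_cases h2 : ∀ c ∈ C2, c ∉ s.sepSet ∪ nbhd G s.sepSet
    · exact Or.inl (GraphSepAux.nested_of_miss hG s s' hs hs' hC2c hC2n h2)
    · push_neg at h1 h2
      obtain ⟨x, hxC, hxN⟩ := h1
      obtain ⟨y, hyC, hyN⟩ := h2
      exact Or.inr ⟨x, hxN, y, hyN,
        GraphSepAux.minsep s' hC1c hC1n hC1s hC2c hC2n hC2s hxC hyC⟩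
end
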